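/- arXiv:1411.4159 — 5 statements merged into one kernel-verified Lean document; each statement's English description precedes it below -/
import Mathlib

section
/- Let S be a semigroup with zero. Then for any two distinct a, b ∈ D(S)*, at least one of the following holds: (i) a and b are adjacent in the undirected zero-divisor graph Γ̄(S); (ii) there exists c ∈ D(S)* adjacent to both a and b; (iii) there exist c, d ∈ D(S)* such that a is adjacent to c, c is adjacent to d, and d is adjacent to b. In particular, Γ̄(S) is a connected graph and diam(Γ̄(S)) ≤ 3. -/
/-- `D(S)* = D(S) \ {0}`: the set of nonzero one-sided zero-divisors of the semigroup `S`. -/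
def Dstar (S : Type*) [SemigroupWithZero S] : Set S :=
  {a | a ≠ 0 ∧ ∃ b : S, b ≠ 0 ∧ (a * b = 0 ∨ b * a = 0)}

/-- `A^l(S) = {a ∈ D(S)* : b*a = 0 for some b ∈ D(S)*}`. -/
def Aleft (S : Type*) [SemigroupWithZero S] : Set S :=
  {a | a ∈ Dstar S ∧ ∃ b ∈ Dstar S, b * a = 0}

/-- `A^r(S) = {a ∈ D(S)* : a*b = 0 for some b ∈ D(S)*}`. -/
def Aright (S : Type*) [SemigroupWithZero S] : Set S :=
  {a | a ∈ Dstar S ∧ ∃ b ∈ Dstar S, a * b = 0}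

/-- The directed edge `a → b` of `Γ(S)`: both are vertices, `a ≠ b` and `a*b = 0`. -/
def ZDEdge (S : Type*) [SemigroupWithZero S] (a b : S) : Prop :=
  a ∈ Dstar S ∧ b ∈ Dstar S ∧ a ≠ b ∧ a * b = 0

/-- `a` and `b` are distinct elements of `D(S)*` that are adjacent in `Γ̄(S)`. -/
def UEdge (S : Type*) [SemigroupWithZero S] (a b : S) : Prop :=
  a ∈ Dstar S ∧ b ∈ Dstar S ∧ a ≠ b ∧ (a * b = 0 ∨ b * a = 0)

/-- The undirected zero-divisor graph `Γ̄(S)` on vertex set `D(S)*`: distinct `a, b`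
are adjacent iff `a*b = 0` or `b*a = 0`. -/
def zdGraph (S : Type*) [SemigroupWithZero S] : SimpleGraph (Dstar S) where
  Adj a b := a ≠ b ∧ ((a : S) * b = 0 ∨ (b : S) * a = 0)
  symm := ⟨by rintro a b ⟨hab, h⟩; exact ⟨hab.symm, h.symm⟩⟩
  loopless := ⟨by rintro a ⟨h, -⟩; exact h rfl⟩

namespace ZDaux
variable {S : Type*} [SemigroupWithZero S]

lemma memD {c z : S} (hc : c ≠ 0) (hz : z ≠ 0) (h : c * z = 0 ∨ z * c = 0) :
    c ∈ Dstar S := ⟨hc, z, hz, h⟩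

/-- There is a neighbour of `a` distinct from both `a` and `b`. -/
lemma claimA {a b : S} (ha : a ∈ Dstar S) (hb : b ∈ Dstar S)
    (h1 : a * b ≠ 0) (h2 : b * a ≠ 0) :
    ∃ c : S, c ≠ 0 ∧ c ≠ a ∧ c ≠ b ∧ (a * c = 0 ∨ c * a = 0) := by
  obtain ⟨ha0, x, hx0, hx⟩ := ha
  by_cases hxb : x = b
  · subst hxb; rcases hx with h | h
    · exact absurd h h1
    · exact absurd h h2
  by_cases hxa : x = a
  · -- a² = 0
    have haa : a * a = 0 := by rcases hx with h | h <;> rw [hxa] at h <;> exact h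
    by_cases h1a : a * b = a
    · by_cases h2a : b * a = a
      · -- use a witness for b
        obtain ⟨hb0, y, hy0, hy⟩ := hb
        rcases hy with hby | hyb
        · -- b*y = 0, so a*y = (a*b)*y = a*(b*y) = 0
          have hay : a * y = 0 := by
            calc a * y = (a * b) * y := by rw [h1a]
            _ = a * (b * y) := mul_assoc _ _ _
            _ = 0 := by rw [hby, mul_zero]
          refine ⟨y, hy0, ?_, ?_, Or.inl hay⟩
          · rintro rfl; rw [hby] at h2a; exact ha0 h2a.symm
          · rintro rfl; rw [hay] at h1a; exact ha0 h1a.symm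
        · -- y*b = 0, so y*a = y*(b*a) = (y*b)*a = 0
          have hya : y * a = 0 := by
            calc y * a = y * (b * a) := by rw [h2a]
            _ = (y * b) * a := (mul_assoc _ _ _).symm
            _ = 0 := by rw [hyb, zero_mul]
          refine ⟨y, hy0, ?_, ?_, Or.inr hya⟩
          · rintro rfl; rw [hyb] at h1a; exact ha0 h1a.symm
          · rintro rfl; rw [hya] at h2a; exact ha0 h2a.symm
      · -- candidate c = b*a
        have hkey : a * (b * a) = 0 := by
          calc a * (b * a) = (a * b) * a := (mul_assoc _ _ _).symm
          _ = a * a := by rw [h1a]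
          _ = 0 := haa
        refine ⟨b * a, h2, h2a, ?_, Or.inl hkey⟩
        rintro hba
        -- b*a = b with a*b = a, a² = 0 leads to a = a² = 0
        have : a * a = a := by
          calc a * a = (a * b) * a := by rw [h1a]
          _ = a * (b * a) := mul_assoc _ _ _
          _ = a * b := by rw [hba]
          _ = a := h1a
        rw [haa] at this; exact ha0 this.symm
    · -- candidate c = a*b
      have hkey : a * (a * b) = 0 := by
        calc a * (a * b) = (a * a) * b := (mul_assoc _ _ _).symm
        _ = 0 := by rw [haa, zero_mul]
      refine ⟨a * b, h1, h1a, ?_, Or.inl hkey⟩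
      rintro hab
      rw [hab] at hkey
      exact h1 hkey
  · exact ⟨x, hx0, hxa, hxb, hx⟩

lemma key (a : S) (ha : a ∈ Dstar S) (b : S) (hb : b ∈ Dstar S) (hne : a ≠ b) :
    UEdge S a b ∨
      (∃ c ∈ Dstar S, UEdge S a c ∧ UEdge S c b) ∨
      (∃ c ∈ Dstar S, ∃ d ∈ Dstar S, UEdge S a c ∧ UEdge S c d ∧ UEdge S d b) := by
  have ha0 : a ≠ 0 := ha.1
  have hb0 : b ≠ 0 := hb.1
  by_cases hab : a * b = 0 ∨ b * a = 0
  · exact Or.inl ⟨ha, hb, hne, hab⟩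
  push_neg at hab
  obtain ⟨h1, h2⟩ := hab
  obtain ⟨c, hc0, hca, hcb, hc⟩ := claimA ha hb h1 h2
  obtain ⟨d, hd0, hdb, hda, hd⟩ := claimA hb ha h2 h1
  have hcD : c ∈ Dstar S := memD hc0 ha0 (Or.symm hc)
  have hdD : d ∈ Dstar S := memD hd0 hb0 (Or.symm hd)
  by_cases hcd : c = d
  · subst hcd
    exact Or.inr (Or.inl ⟨c, hcD, ⟨ha, hcD, fun h => hca h.symm, hc⟩,
      ⟨hcD, hb, hcb, Or.symm hd⟩⟩)
  have Eac : UEdge S a c := ⟨ha, hcD, fun h => hca h.symm, hc⟩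
  have Edb : UEdge S d b := ⟨hdD, hb, hdb, Or.symm hd⟩
  rcases hc with hac | hca0 <;> rcases hd with hbd | hdb0
  · -- a*c = 0, b*d = 0  (same-side left)
    by_cases hcd0 : c * d = 0 ∨ d * c = 0
    · exact Or.inr (Or.inr ⟨c, hcD, d, hdD, Eac, ⟨hcD, hdD, hcd, hcd0⟩, Edb⟩)
    push_neg at hcd0
    by_cases hcb0 : c * b = 0 ∨ b * c = 0
    · exact Or.inr (Or.inl ⟨c, hcD, Eac, ⟨hcD, hb, hcb, hcb0⟩⟩)
    push_neg at hcb0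
    by_cases had0 : a * d = 0 ∨ d * a = 0
    · exact Or.inr (Or.inl ⟨d, hdD, ⟨ha, hdD, fun h => hda h.symm, had0⟩, Edb⟩)
    push_neg at had0
    -- e := c*b
    have he0 : c * b ≠ 0 := hcb0.1
    have hae : a * (c * b) = 0 := by rw [← mul_assoc, hac, zero_mul]
    have hed : (c * b) * d = 0 := by rw [mul_assoc, hbd, mul_zero]
    have heD : c * b ∈ Dstar S := memD he0 ha0 (Or.inr hae)
    have hane : a ≠ c * b := fun h => had0.1 (by rw [h]; exact hed)
    have hend : c * b ≠ d := fun h => had0.1 (by rw [← h]; exact hae)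
    exact Or.inr (Or.inr ⟨c * b, heD, d, hdD,
      ⟨ha, heD, hane, Or.inl hae⟩, ⟨heD, hdD, hend, Or.inl hed⟩, Edb⟩)
  · -- a*c = 0, d*b = 0 : e := c*d
    by_cases hcd0 : c * d = 0
    · exact Or.inr (Or.inr ⟨c, hcD, d, hdD, Eac, ⟨hcD, hdD, hcd, Or.inl hcd0⟩, Edb⟩)
    have hae : a * (c * d) = 0 := by rw [← mul_assoc, hac, zero_mul]
    have heb : (c * d) * b = 0 := by rw [mul_assoc, hdb0, mul_zero]
    have heD : c * d ∈ Dstar S := memD hcd0 ha0 (Or.inr hae)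
    have hane : a ≠ c * d := fun h => h1 (by rw [h]; exact heb)
    have hneb : c * d ≠ b := fun h => h1 (by rw [← h]; exact hae)
    exact Or.inr (Or.inl ⟨c * d, heD, ⟨ha, heD, hane, Or.inl hae⟩,
      ⟨heD, hb, hneb, Or.inl heb⟩⟩)
  · -- c*a = 0, b*d = 0 : e := d*c
    by_cases hdc0 : d * c = 0
    · exact Or.inr (Or.inr ⟨c, hcD, d, hdD, Eac, ⟨hcD, hdD, hcd, Or.inr hdc0⟩, Edb⟩)
    have hea : (d * c) * a = 0 := by rw [mul_assoc, hca0, mul_zero]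
    have hbe : b * (d * c) = 0 := by rw [← mul_assoc, hbd, zero_mul]
    have heD : d * c ∈ Dstar S := memD hdc0 ha0 (Or.inl hea)
    have hane : a ≠ d * c := fun h => h2 (by rw [h]; exact hbe)
    have hneb : d * c ≠ b := fun h => h2 (by rw [← h]; exact hea)
    exact Or.inr (Or.inl ⟨d * c, heD, ⟨ha, heD, hane, Or.inr hea⟩,
      ⟨heD, hb, hneb, Or.inr hbe⟩⟩)
  · -- c*a = 0, d*b = 0  (same-side right)
    by_cases hcd0 : c * d = 0 ∨ d * c = 0
    · exact Or.inr (Or.inr ⟨c, hcD, d, hdD, Eac, ⟨hcD, hdD, hcd, hcd0⟩, Edb⟩)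
    push_neg at hcd0
    by_cases hcb0 : c * b = 0 ∨ b * c = 0
    · exact Or.inr (Or.inl ⟨c, hcD, Eac, ⟨hcD, hb, hcb, hcb0⟩⟩)
    push_neg at hcb0
    by_cases had0 : a * d = 0 ∨ d * a = 0
    · exact Or.inr (Or.inl ⟨d, hdD, ⟨ha, hdD, fun h => hda h.symm, had0⟩, Edb⟩)
    push_neg at had0
    -- e := b*c
    have he0 : b * c ≠ 0 := hcb0.2
    have hea : (b * c) * a = 0 := by rw [mul_assoc, hca0, mul_zero]
    have hde : d * (b * c) = 0 := by rw [← mul_assoc, hdb0, zero_mul]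
    have heD : b * c ∈ Dstar S := memD he0 ha0 (Or.inl hea)
    have hane : a ≠ b * c := fun h => had0.2 (by rw [h]; exact hde)
    have hend : b * c ≠ d := fun h => had0.2 (by rw [← h]; exact hea)
    exact Or.inr (Or.inr ⟨b * c, heD, d, hdD,
      ⟨ha, heD, hane, Or.inr hea⟩, ⟨heD, hdD, hend, Or.inr hde⟩, Edb⟩)

lemma toAdj {u v : Dstar S} (h : UEdge S (u : S) (v : S)) : (zdGraph S).Adj u v :=
  ⟨fun he => h.2.2.1 (congrArg Subtype.val he), h.2.2.2⟩

lemma walk3 (u v : Dstar S) : ∃ p : (zdGraph S).Walk u v, p.length ≤ 3 := by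
  by_cases huv : u = v
  · subst huv; exact ⟨.nil, by simp⟩
  have hne : (u : S) ≠ (v : S) := fun h => huv (Subtype.ext h)
  rcases key (u : S) u.2 (v : S) v.2 hne with h1 | ⟨c, hcD, h1, h2⟩ |
    ⟨c, hcD, d, hdD, h1, h2, h3⟩
  · exact ⟨.cons (toAdj h1) .nil, by simp⟩
  · exact ⟨.cons (toAdj (u := u) (v := ⟨c, hcD⟩) h1)
      (.cons (toAdj (u := ⟨c, hcD⟩) (v := v) h2) .nil), by simp⟩
  · exact ⟨.cons (toAdj (u := u) (v := ⟨c, hcD⟩) h1)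
      (.cons (toAdj (u := ⟨c, hcD⟩) (v := ⟨d, hdD⟩) h2)
        (.cons (toAdj (u := ⟨d, hdD⟩) (v := v) h3) .nil)), by simp⟩

end ZDaux

/-- Any two distinct `a, b ∈ D(S)*` satisfy (i), (ii) or (iii); in
particular `Γ̄(S)` is connected and `diam(Γ̄(S)) ≤ 3`. -/
theorem zdGraph_connected_and_diam_le_three (S : Type*) [SemigroupWithZero S] :
    (∀ a ∈ Dstar S, ∀ b ∈ Dstar S, a ≠ b →
      UEdge S a b ∨
      (∃ c ∈ Dstar S, UEdge S a c ∧ UEdge S c b) ∨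
      (∃ c ∈ Dstar S, ∃ d ∈ Dstar S, UEdge S a c ∧ UEdge S c d ∧ UEdge S d b)) ∧
    (zdGraph S).Preconnected ∧
    (∀ a b : Dstar S, (zdGraph S).dist a b ≤ 3) := by
  refine ⟨fun a ha b hb hne => ZDaux.key a ha b hb hne, ?_, ?_⟩
  · intro u v
    obtain ⟨p, -⟩ := ZDaux.walk3 u v
    exact ⟨p⟩
  · intro u v
    obtain ⟨p, hl⟩ := ZDaux.walk3 u v
    exact (SimpleGraph.dist_le p).trans hl
end

section
/- Let S be a semigroup with zero. If the undirected zero-divisor graph Γ̄(S) contains a cycle, then the girth of Γ̄(S) is at most 4. -/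
namespace ZDAux

open SimpleGraph

section GraphLemmas

variable {V : Type*} {G : SimpleGraph V}

lemma girth_le_of_isCycle {a : V} {w : G.Walk a a} (hw : w.IsCycle) :
    G.girth ≤ w.length := by
  have h1 : G.egirth ≤ (w.length : ℕ∞) :=
    iInf_le_of_le a (iInf_le_of_le w (iInf_le_of_le hw le_rfl))
  have := ENat.toNat_le_toNat h1 (by simp)
  simpa [SimpleGraph.girth] using this

lemma girth_le_three {a b c : V} (hab : G.Adj a b) (hbc : G.Adj b c)
    (hca : G.Adj c a) : G.girth ≤ 3 := by
  have h1 := hab.ne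
  have h2 := hbc.ne
  have h3 := hca.ne
  have hcyc : (Walk.cons hab (Walk.cons hbc (Walk.cons hca Walk.nil))).IsCycle := by
    rw [Walk.isCycle_def]
    refine ⟨⟨?_⟩, by simp, ?_⟩
    · simp [Walk.isTrail_def, Sym2.eq_iff]; aesop
    · simp; aesop
  simpa using girth_le_of_isCycle hcyc

lemma girth_le_four {a b c d : V} (hab : G.Adj a b) (hbc : G.Adj b c)
    (hcd : G.Adj c d) (hda : G.Adj d a) (hac : a ≠ c) (hbd : b ≠ d) :
    G.girth ≤ 4 := by
  have h1 := hab.ne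
  have h2 := hbc.ne
  have h3 := hcd.ne
  have h4 := hda.ne
  have hcyc : (Walk.cons hab (Walk.cons hbc (Walk.cons hcd
      (Walk.cons hda Walk.nil)))).IsCycle := by
    rw [Walk.isCycle_def]
    refine ⟨⟨?_⟩, by simp, ?_⟩
    · simp [Walk.isTrail_def, Sym2.eq_iff]; aesop
    · simp; aesop
  simpa using girth_le_of_isCycle hcyc

lemma support_getElem : ∀ {u v : V} (p : G.Walk u v) (i : ℕ) (h : i < p.support.length),
    p.support[i] = p.getVert i := by
  intro u v p
  induction p with
  | nil => intro i h; simp at h; subst h; simp [Walk.getVert]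
  | cons hadj q ih =>
    intro i h
    cases i with
    | zero => simp [Walk.getVert]
    | succ i =>
      simp only [Walk.support_cons, List.getElem_cons_succ, Walk.getVert_cons_succ]
      exact ih i (by
        have := h
        simp only [Walk.support_cons, List.length_cons] at this
        omega)

lemma getVert_injOn {a : V} {w : G.Walk a a} (hw : w.IsCycle) {i j : ℕ}
    (hi : i < w.length) (hj : j < w.length) (hij : i ≠ j) :
    w.getVert i ≠ w.getVert j := by
  have hlen : w.support.length = w.length + 1 := Walk.length_support w
  have htail : w.support.tail.length = w.length := by
    rw [List.length_tail, hlen]; omega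
  have hnodup := hw.support_nodup
  have hst : ∀ (k : ℕ) (h : k < w.support.tail.length),
      w.support.tail[k] = w.getVert (k+1) := by
    intro k h
    rw [List.getElem_tail]
    exact support_getElem w (k+1) (by omega)
  have hwrap : w.support.tail[w.length - 1]'(by omega) = w.getVert 0 := by
    rw [hst (w.length - 1) (by omega)]
    have h3 := hw.three_le_length
    have h4 : w.length - 1 + 1 = w.length := by omega
    rw [h4, Walk.getVert_length, Walk.getVert_zero]
  intro heq
  rcases Nat.eq_zero_or_pos i with hi0 | hipos
  · subst hi0
    have hj1 : j - 1 < w.support.tail.length := by omega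
    have hx : w.support.tail[j-1] = w.getVert 0 := by
      rw [hst (j-1) hj1]
      have : j - 1 + 1 = j := by omega
      rw [this, ← heq]
    rw [← hwrap] at hx
    have := hnodup.getElem_inj_iff.mp hx
    omega
  · rcases Nat.eq_zero_or_pos j with hj0 | hjpos
    · subst hj0
      have hi1 : i - 1 < w.support.tail.length := by omega
      have hx : w.support.tail[i-1] = w.getVert 0 := by
        rw [hst (i-1) hi1]
        have : i - 1 + 1 = i := by omega
        rw [this, heq]
      rw [← hwrap] at hx
      have := hnodup.getElem_inj_iff.mp hx
      omega
    · have h1 : i - 1 < w.support.tail.length := by omega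
      have h2 : j - 1 < w.support.tail.length := by omega
      have hx : w.support.tail[i-1] = w.support.tail[j-1] := by
        rw [hst (i-1) h1, hst (j-1) h2]
        have e1 : i - 1 + 1 = i := by omega
        have e2 : j - 1 + 1 = j := by omega
        rw [e1, e2, heq]
      have := hnodup.getElem_inj_iff.mp hx
      omega

end GraphLemmas

section CoreSemigroup

variable {S : Type*} [SemigroupWithZero S]

/-- The "all edges aligned forward" case of the main argument. -/
theorem allF (n : ℕ) (hn : 5 ≤ n) (v : ℕ → S)
    (hper : ∀ k, v (k + n) = v k)
    (hz : ∀ k, v k ≠ 0)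
    (hd : ∀ i j, i % n ≠ j % n → v i ≠ v j)
    (hT : ∀ a b c : S, a ≠ 0 → b ≠ 0 → c ≠ 0 → a ≠ b → a ≠ c → b ≠ c →
      (a*b = 0 ∨ b*a = 0) → (b*c = 0 ∨ c*b = 0) → (a*c = 0 ∨ c*a = 0) → False)
    (hQ : ∀ a b c d : S, a ≠ 0 → b ≠ 0 → c ≠ 0 → d ≠ 0 →
      a ≠ b → a ≠ c → a ≠ d → b ≠ c → b ≠ d → c ≠ d →
      (a*b = 0 ∨ b*a = 0) → (b*c = 0 ∨ c*b = 0) → (c*d = 0 ∨ d*c = 0) →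
      (d*a = 0 ∨ a*d = 0) → False)
    (hF : ∀ i, v i * v (i+1) = 0)
    (hnb : ∀ i, v (i+1) * v i ≠ 0) :
    False := by
  have hdk : ∀ i k, 0 < k → k < n → v i ≠ v (i + k) := by
    intro i k hk1 hk2
    apply hd
    intro hmod
    have h1 : n ∣ (i + k) - i := (Nat.modEq_iff_dvd' (by omega)).mp hmod
    have h2 : n ∣ k := by simpa using h1
    have := Nat.le_of_dvd hk1 h2
    omega
  have hhigh : ∀ i, v (i+1) * v i = v (i+1) := by
    intro i
    have hm0 : v (i+1) * v i ≠ 0 := hnb i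
    have hpm : v i * (v (i+1) * v i) = 0 := by
      rw [← mul_assoc, hF i, zero_mul]
    have hmq : (v (i+1) * v i) * v (i+1) = 0 := by
      rw [mul_assoc, hF i, mul_zero]
    have hback : v (i+1) * v i = v i ∨ v (i+1) * v i = v (i+1) := by
      by_cases h1 : v (i+1) * v i = v i
      · exact Or.inl h1
      by_cases h2 : v (i+1) * v i = v (i+1)
      · exact Or.inr h2
      exfalso
      exact hT (v i) (v (i+1) * v i) (v (i+1)) (hz i) hm0 (hz (i+1))
        (fun hh => h1 hh.symm) (hdk i 1 (by omega) (by omega)) h2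
        (Or.inl hpm) (Or.inl hmq) (Or.inl (hF i))
    rcases hback with hlow | hhigh
    · exfalso
      set p := v (i + (n-1)) with hp
      set a := v i with ha
      set b := v (i+1) with hb
      set c := v (i+2) with hc
      have hab : a * b = 0 := hF i
      have hbc : b * c = 0 := hF (i+1)
      have hba : b * a = a := hlow
      have hpa : p * a = 0 := by
        have h0 := hF (i + (n-1))
        rw [show i + (n-1) + 1 = i + n by omega, hper i] at h0
        exact h0
      have hne_ab : a ≠ b := hdk i 1 (by omega) (by omega)
      have hne_pa : p ≠ a := (hdk i (n-1) (by omega) (by omega)).symm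
      have hne_pb : p ≠ b := by
        have := hdk (i+1) (n-2) (by omega) (by omega)
        rw [show i + 1 + (n-2) = i + (n-1) by omega] at this
        exact this.symm
      have hTpb : ¬(p*b = 0 ∨ b*p = 0) := by
        intro hh
        exact hT p a b (hz _) (hz _) (hz _) hne_pa hne_pb hne_ab
          (Or.inl hpa) (Or.inl hab) hh
      have hac : ¬(a*c = 0 ∨ c*a = 0) := by
        intro hh
        exact hT a b c (hz _) (hz _) (hz _) hne_ab
          (hdk i 2 (by omega) (by omega)) (hdk (i+1) 1 (by omega) (by omega))
          (Or.inl hab) (Or.inl hbc) hh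
      set q := c * a with hqdef
      have hq0 : q ≠ 0 := fun hh => hac (Or.inr hh)
      have hqb : q * b = 0 := by rw [hqdef, mul_assoc, hab, mul_zero]
      have hbq : b * q = 0 := by rw [hqdef, ← mul_assoc, hbc, zero_mul]
      have haq : a ≠ q := by
        intro hh
        rw [← hh] at hbq
        rw [hba] at hbq
        exact hz i hbq
      by_cases hqb' : q = b
      · have h5 : (b*a)*(b*a) = 0 := by
          rw [mul_assoc, ← mul_assoc a b a, hab, zero_mul, mul_zero]
        rw [hba] at h5
        have h6 : q * a = a := by rw [hqb', hba]
        have h7 : q * a = c * (a * a) := mul_assoc c a a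
        have : a = 0 := by rw [← h6, h7, h5, mul_zero]
        exact hz i this
      · set m := a * q with hmdef
        have hm₀ : b * (a * q) = a * q := by rw [← mul_assoc, hba]
        have hqm : q * m = 0 := by
          rw [hmdef, ← hm₀, ← mul_assoc, hqb, zero_mul]
        have hmb : m * b = 0 := by rw [hmdef, mul_assoc, hqb, mul_zero]
        have hpm2 : p * m = 0 := by rw [hmdef, ← mul_assoc, hpa, zero_mul]
        have hmneb : m ≠ b := by
          intro hh
          rw [hh] at hpm2
          exact hTpb (Or.inl hpm2)
        by_cases hm0' : m = 0
        · exact hT a q b (hz _) hq0 (hz _) haq hne_ab hqb'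
            (Or.inl hm0') (Or.inl hqb) (Or.inl hab)
        · by_cases hmq' : m = q
          · by_cases hma : m = a
            · exact haq (hma.symm.trans hmq')
            · exact hQ p m b a (hz _) hm0' (hz _) (hz _)
                (fun hh => hTpb (Or.inl (hh ▸ hmb)))
                hne_pb hne_pa hmneb (fun hh => hma hh)
                (fun hh => hne_ab hh.symm)
                (Or.inl hpm2) (Or.inl hmb) (Or.inr hab) (Or.inr hpa)
          · exact hT q m b hq0 hm0' (hz _) (fun hh => hmq' hh.symm) hqb' hmneb
              (Or.inl hqm) (Or.inl hmb) (Or.inl hqb)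
    · exact hhigh
  have claim : ∀ d : ℕ, d ≤ n - 2 → v 1 * v (n - d) = v 1 := by
    intro d
    induction d with
    | zero =>
      intro _
      have hv0 : v n = v 0 := by
        have := hper 0
        simpa using this
      simpa [hv0] using hhigh 0
    | succ d ih =>
      intro hdle
      have ihh := ih (by omega)
      have hidx : n - (d+1) + 1 = n - d := by omega
      have hh := hhigh (n - (d+1))
      rw [hidx] at hh
      calc v 1 * v (n - (d+1)) = (v 1 * v (n-d)) * v (n - (d+1)) := by rw [ihh]
      _ = v 1 * (v (n-d) * v (n-(d+1))) := mul_assoc _ _ _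
      _ = v 1 * v (n-d) := by rw [hh]
      _ = v 1 := ihh
  have hfin := claim (n-2) le_rfl
  rw [show n - (n-2) = 2 by omega] at hfin
  have : v 1 * v 2 = 0 := hF 1
  rw [this] at hfin
  exact hz 1 hfin.symm

/-- Core semigroup-theoretic contradiction: a "cyclic" configuration of length `n ≥ 5`
in a triangle-free and square-free zero-divisor situation is impossible. -/
theorem core (n : ℕ) (hn : 5 ≤ n)
    (v : ℕ → S) (hper : ∀ k, v (k + n) = v k)
    (hz : ∀ k, v k ≠ 0)
    (hd : ∀ i j, i % n ≠ j % n → v i ≠ v j)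
    (he : ∀ k, v k * v (k+1) = 0 ∨ v (k+1) * v k = 0)
    (hT : ∀ a b c : S, a ≠ 0 → b ≠ 0 → c ≠ 0 → a ≠ b → a ≠ c → b ≠ c →
      (a*b = 0 ∨ b*a = 0) → (b*c = 0 ∨ c*b = 0) → (a*c = 0 ∨ c*a = 0) → False)
    (hQ : ∀ a b c d : S, a ≠ 0 → b ≠ 0 → c ≠ 0 → d ≠ 0 →
      a ≠ b → a ≠ c → a ≠ d → b ≠ c → b ≠ d → c ≠ d →
      (a*b = 0 ∨ b*a = 0) → (b*c = 0 ∨ c*b = 0) → (c*d = 0 ∨ d*c = 0) →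
      (d*a = 0 ∨ a*d = 0) → False) :
    False := by
  have hdk : ∀ i k, 0 < k → k < n → v i ≠ v (i + k) := by
    intro i k hk1 hk2
    apply hd
    intro hmod
    have h1 : n ∣ (i + k) - i := (Nat.modEq_iff_dvd' (by omega)).mp hmod
    have h2 : n ∣ k := by simpa using h1
    have := Nat.le_of_dvd hk1 h2
    omega
  by_cases hsink : ∃ j, v j * v (j+1) = 0 ∧ v (j+2) * v (j+1) = 0
  · obtain ⟨j, h1, h2⟩ := hsink
    set a := v j with hadef
    set b := v (j+1) with hbdef
    set c := v (j+2) with hcdef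
    set d := v (j+3) with hddef
    set e := v (j+4) with hedef
    have hne_ab : a ≠ b := hdk j 1 (by omega) (by omega)
    have hne_ac : a ≠ c := hdk j 2 (by omega) (by omega)
    have hne_bc : b ≠ c := hdk (j+1) 1 (by omega) (by omega)
    have hne_bd : b ≠ d := hdk (j+1) 2 (by omega) (by omega)
    have hne_be : b ≠ e := hdk (j+1) 3 (by omega) (by omega)
    have hne_cd : c ≠ d := hdk (j+2) 1 (by omega) (by omega)
    have hne_ce : c ≠ e := hdk (j+2) 2 (by omega) (by omega)
    have hne_de : d ≠ e := hdk (j+3) 1 (by omega) (by omega)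
    have hac : ¬(a*c = 0 ∨ c*a = 0) := by
      intro hh
      exact hT a b c (hz _) (hz _) (hz _) hne_ab hne_ac hne_bc
        (Or.inl h1) (Or.inr h2) hh
    have collapse : ∀ x : S, b * x = 0 ∨ b * x = b := by
      intro x
      by_cases g0 : b * x = 0
      · exact Or.inl g0
      by_cases gb : b * x = b
      · exact Or.inr gb
      exfalso
      have hat : a * (b * x) = 0 := by rw [← mul_assoc, h1, zero_mul]
      have hct : c * (b * x) = 0 := by rw [← mul_assoc, h2, zero_mul]
      have hta : b * x ≠ a := by
        intro hh; rw [hh] at hct; exact hac (Or.inr hct)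
      have htc : b * x ≠ c := by
        intro hh; rw [hh] at hat; exact hac (Or.inl hat)
      exact hQ a (b*x) c b (hz _) g0 (hz _) (hz _)
        (fun hh => hta hh.symm) hne_ac hne_ab htc gb hne_bc.symm
        (Or.inl hat) (Or.inr hct) (Or.inl h2) (Or.inr h1)
    have hbd : b * d = b := by
      rcases collapse d with h0 | hb
      · exfalso
        exact hT b c d (hz _) (hz _) (hz _) hne_bc hne_bd hne_cd
          (Or.inr h2) (he (j+2)) (Or.inl h0)
      · exact hb
    have hbe : b * e = b := by
      rcases collapse e with h0 | hb
      · exfalso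
        exact hQ b c d e (hz _) (hz _) (hz _) (hz _)
          hne_bc hne_bd hne_be hne_cd hne_ce hne_de
          (Or.inr h2) (he (j+2)) (he (j+3)) (Or.inr h0)
      · exact hb
    rcases he (j+3) with hde | hed
    · have : b = 0 := by
        calc b = b * e := hbe.symm
        _ = (b * d) * e := by rw [hbd]
        _ = b * (d * e) := mul_assoc _ _ _
        _ = 0 := by rw [hde, mul_zero]
      exact hz (j+1) this
    · have : b = 0 := by
        calc b = b * d := hbd.symm
        _ = (b * e) * d := by rw [hbe]
        _ = b * (e * d) := mul_assoc _ _ _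
        _ = 0 := by rw [hed, mul_zero]
      exact hz (j+1) this
  by_cases hsource : ∃ j, v (j+3) * v (j+2) = 0 ∧ v (j+3) * v (j+4) = 0
  · obtain ⟨j, h1, h2⟩ := hsource
    set e := v j with hedef
    set d := v (j+1) with hddef
    set a := v (j+2) with hadef
    set b := v (j+3) with hbdef
    set c := v (j+4) with hcdef
    have hne_ed : e ≠ d := hdk j 1 (by omega) (by omega)
    have hne_ea : e ≠ a := hdk j 2 (by omega) (by omega)
    have hne_eb : e ≠ b := hdk j 3 (by omega) (by omega)
    have hne_da : d ≠ a := hdk (j+1) 1 (by omega) (by omega)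
    have hne_db : d ≠ b := hdk (j+1) 2 (by omega) (by omega)
    have hne_ab : a ≠ b := hdk (j+2) 1 (by omega) (by omega)
    have hne_ac : a ≠ c := hdk (j+2) 2 (by omega) (by omega)
    have hne_bc : b ≠ c := hdk (j+3) 1 (by omega) (by omega)
    have hac : ¬(a*c = 0 ∨ c*a = 0) := by
      intro hh
      exact hT a b c (hz _) (hz _) (hz _) hne_ab hne_ac hne_bc
        (Or.inr h1) (Or.inl h2) hh
    have collapse : ∀ x : S, x * b = 0 ∨ x * b = b := by
      intro x
      by_cases g0 : x * b = 0
      · exact Or.inl g0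
      by_cases gb : x * b = b
      · exact Or.inr gb
      exfalso
      have hta : (x * b) * a = 0 := by rw [mul_assoc, h1, mul_zero]
      have htc : (x * b) * c = 0 := by rw [mul_assoc, h2, mul_zero]
      have hne_ta : x * b ≠ a := by
        intro hh; rw [hh] at htc; exact hac (Or.inl htc)
      have hne_tc : x * b ≠ c := by
        intro hh; rw [hh] at hta; exact hac (Or.inr hta)
      exact hQ a (x*b) c b (hz _) g0 (hz _) (hz _)
        (fun hh => hne_ta hh.symm) hne_ac hne_ab hne_tc gb hne_bc.symm
        (Or.inr hta) (Or.inl htc) (Or.inr h2) (Or.inl h1)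
    have hdb : d * b = b := by
      rcases collapse d with h0 | hb
      · exfalso
        exact hT b a d (hz _) (hz _) (hz _) hne_ab.symm hne_db.symm hne_da.symm
          (Or.inl h1) ((he (j+1)).symm) (Or.inr h0)
      · exact hb
    have heb : e * b = b := by
      rcases collapse e with h0 | hb
      · exfalso
        exact hQ b a d e (hz _) (hz _) (hz _) (hz _)
          hne_ab.symm hne_db.symm hne_eb.symm hne_da.symm hne_ea.symm hne_ed.symm
          (Or.inl h1) ((he (j+1)).symm) ((he j).symm) (Or.inl h0)
      · exact hb
    rcases he j with hed | hde
    · have : b = 0 := by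
        calc b = e * b := heb.symm
        _ = e * (d * b) := by rw [hdb]
        _ = (e * d) * b := (mul_assoc _ _ _).symm
        _ = 0 := by rw [hed, zero_mul]
      exact hz (j+3) this
    · have : b = 0 := by
        calc b = d * b := hdb.symm
        _ = d * (e * b) := by rw [heb]
        _ = (d * e) * b := (mul_assoc _ _ _).symm
        _ = 0 := by rw [hde, zero_mul]
      exact hz (j+3) this
  have hns : ∀ j, ¬(v j * v (j+1) = 0 ∧ v (j+2) * v (j+1) = 0) :=
    fun j hh => hsink ⟨j, hh⟩
  have hnr : ∀ j, ¬(v (j+1) * v j = 0 ∧ v (j+1) * v (j+2) = 0) := by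
    intro j ⟨u1, u2⟩
    apply hsource
    refine ⟨j + (n-2), ?_, ?_⟩
    · rw [show j + (n-2) + 3 = (j+1) + n by omega, hper,
         show j + (n-2) + 2 = j + n by omega, hper]
      exact u1
    · rw [show j + (n-2) + 3 = (j+1) + n by omega, hper,
         show j + (n-2) + 4 = (j+2) + n by omega, hper]
      exact u2
  have hFstep : ∀ i, v i * v (i+1) = 0 → v (i+1) * v (i+2) = 0 := by
    intro i hf
    rcases he (i+1) with h | h
    · exact h
    · exact absurd ⟨hf, h⟩ (hns i)
  have hBstep : ∀ i, v (i+1) * v i = 0 → v (i+2) * v (i+1) = 0 := by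
    intro i hb
    rcases he (i+1) with h | h
    · exact absurd ⟨hb, h⟩ (hnr i)
    · exact h
  rcases he 0 with hF0 | hB0
  · have hFall : ∀ i, v i * v (i+1) = 0 := by
      intro i
      induction i with
      | zero => exact hF0
      | succ i ih => exact hFstep i ih
    have hnb : ∀ i, v (i+1) * v i ≠ 0 := by
      intro i hh
      apply hns (i + (n-1))
      constructor
      · exact hFall (i + (n-1))
      · rw [show i + (n-1) + 2 = (i+1) + n by omega, hper,
           show i + (n-1) + 1 = i + n by omega, hper]
        exact hh
    exact allF n hn v hper hz hd hT hQ hFall hnb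
  · have hBall : ∀ i, v (i+1) * v i = 0 := by
      intro i
      induction i with
      | zero => exact hB0
      | succ i ih => exact hBstep i ih
    set w : ℕ → S := fun k => v (n - k % n) with hwdef
    have hperw : ∀ k, w (k + n) = w k := by
      intro k; simp only [hwdef, Nat.add_mod_right]
    have hzw : ∀ k, w k ≠ 0 := fun k => hz _
    have revne : ∀ x y : ℕ, x < n → y < n → x ≠ y → (n - x) % n ≠ (n - y) % n := by
      intro x y hx hy hxy
      by_cases hx0 : x = 0
      · subst hx0
        rw [Nat.sub_zero, Nat.mod_self]
        have h1 : n - y < n := by omega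
        rw [Nat.mod_eq_of_lt h1]
        omega
      · by_cases hy0 : y = 0
        · subst hy0
          rw [Nat.sub_zero, Nat.mod_self]
          have h1 : n - x < n := by omega
          rw [Nat.mod_eq_of_lt h1]
          omega
        · rw [Nat.mod_eq_of_lt (by omega), Nat.mod_eq_of_lt (by omega)]
          omega
    have hdw : ∀ i j, i % n ≠ j % n → w i ≠ w j := by
      intro i j hij
      apply hd
      exact revne (i % n) (j % n) (Nat.mod_lt _ (by omega)) (Nat.mod_lt _ (by omega)) hij
    have hFw : ∀ i, w i * w (i+1) = 0 := by
      intro i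
      have key : (i % n + 1) % n = (i+1) % n := Nat.mod_add_mod i n 1
      by_cases hm : i % n = n - 1
      · have h1 : (i+1) % n = 0 := by
          rw [← key, hm, show n - 1 + 1 = n by omega, Nat.mod_self]
        simp only [hwdef, hm, h1, Nat.sub_zero, show n - (n-1) = 1 by omega]
        have hv0 : v n = v 0 := by have := hper 0; simpa using this
        rw [hv0]
        exact hBall 0
      · have hlt : i % n < n := Nat.mod_lt _ (by omega)
        have h1 : (i+1) % n = i % n + 1 := by
          rw [← key]; exact Nat.mod_eq_of_lt (by omega)
        simp only [hwdef, h1]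
        have hidx : n - (i % n) = (n - (i % n + 1)) + 1 := by omega
        rw [hidx]
        exact hBall _
    have hnbw : ∀ i, w (i+1) * w i ≠ 0 := by
      intro i hh
      have key : (i % n + 1) % n = (i+1) % n := Nat.mod_add_mod i n 1
      by_cases hm : i % n = n - 1
      · have h1 : (i+1) % n = 0 := by
          rw [← key, hm, show n - 1 + 1 = n by omega, Nat.mod_self]
        simp only [hwdef, hm, h1, Nat.sub_zero, show n - (n-1) = 1 by omega] at hh
        have hv0 : v n = v 0 := by have := hper 0; simpa using this
        rw [hv0] at hh
        exact hns 0 ⟨hh, hBall 1⟩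
      · have hlt : i % n < n := Nat.mod_lt _ (by omega)
        have h1 : (i+1) % n = i % n + 1 := by
          rw [← key]; exact Nat.mod_eq_of_lt (by omega)
        simp only [hwdef, h1] at hh
        set k := n - (i % n + 1) with hkdef
        have hidx : n - (i % n) = k + 1 := by omega
        rw [hidx] at hh
        exact hns k ⟨hh, hBall (k+1)⟩
    exact allF n hn w hperw hzw hdw hT hQ hFw hnbw

end CoreSemigroup

end ZDAux

/-- If `Γ̄(S)` contains a cycle, then its girth is at most `4`. -/
theorem zdGraph_girth_le_four (S : Type*) [SemigroupWithZero S]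
    (h : ¬ (zdGraph S).IsAcyclic) :
    (zdGraph S).girth ≤ 4 := by
  by_contra hc
  push_neg at hc
  have hT : ∀ a b c : S, a ≠ 0 → b ≠ 0 → c ≠ 0 → a ≠ b → a ≠ c → b ≠ c →
      (a*b = 0 ∨ b*a = 0) → (b*c = 0 ∨ c*b = 0) → (a*c = 0 ∨ c*a = 0) → False := by
    intro a b c ha hb hc' hab hac hbc e1 e2 e3
    have va : a ∈ Dstar S := ⟨ha, b, hb, e1⟩
    have vb : b ∈ Dstar S := ⟨hb, c, hc', e2⟩
    have vc : c ∈ Dstar S := ⟨hc', a, ha, e3.symm⟩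
    have A1 : (zdGraph S).Adj ⟨a, va⟩ ⟨b, vb⟩ := ⟨by simp [Subtype.ext_iff, hab], e1⟩
    have A2 : (zdGraph S).Adj ⟨b, vb⟩ ⟨c, vc⟩ := ⟨by simp [Subtype.ext_iff, hbc], e2⟩
    have A3 : (zdGraph S).Adj ⟨c, vc⟩ ⟨a, va⟩ := ⟨by simp [Subtype.ext_iff, hac.symm], e3.symm⟩
    have := ZDAux.girth_le_three A1 A2 A3
    omega
  have hQ : ∀ a b c d : S, a ≠ 0 → b ≠ 0 → c ≠ 0 → d ≠ 0 →
      a ≠ b → a ≠ c → a ≠ d → b ≠ c → b ≠ d → c ≠ d →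
      (a*b = 0 ∨ b*a = 0) → (b*c = 0 ∨ c*b = 0) → (c*d = 0 ∨ d*c = 0) →
      (d*a = 0 ∨ a*d = 0) → False := by
    intro a b c d ha hb hc' hd hab hac had hbc hbd hcd e1 e2 e3 e4
    have va : a ∈ Dstar S := ⟨ha, b, hb, e1⟩
    have vb : b ∈ Dstar S := ⟨hb, c, hc', e2⟩
    have vc : c ∈ Dstar S := ⟨hc', d, hd, e3⟩
    have vd : d ∈ Dstar S := ⟨hd, a, ha, e4⟩
    have A1 : (zdGraph S).Adj ⟨a, va⟩ ⟨b, vb⟩ := ⟨by simp [Subtype.ext_iff, hab], e1⟩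
    have A2 : (zdGraph S).Adj ⟨b, vb⟩ ⟨c, vc⟩ := ⟨by simp [Subtype.ext_iff, hbc], e2⟩
    have A3 : (zdGraph S).Adj ⟨c, vc⟩ ⟨d, vd⟩ := ⟨by simp [Subtype.ext_iff, hcd], e3⟩
    have A4 : (zdGraph S).Adj ⟨d, vd⟩ ⟨a, va⟩ := ⟨by simp [Subtype.ext_iff, had.symm], e4⟩
    have := ZDAux.girth_le_four A1 A2 A3 A4
      (by simp [Subtype.ext_iff, hac]) (by simp [Subtype.ext_iff, hbd])
    omega
  obtain ⟨a, w, hw, hglen⟩ := (SimpleGraph.exists_girth_eq_length).mpr h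
  set n := w.length with hnw
  have hn : 5 ≤ n := by omega
  set v : ℕ → S := fun k => ((w.getVert (k % n) : Dstar S) : S) with hv
  have hper : ∀ k, v (k + n) = v k := by
    intro k; simp only [hv, Nat.add_mod_right]
  have hz : ∀ k, v k ≠ 0 := fun k => (w.getVert (k % n)).2.1
  have hd : ∀ i j, i % n ≠ j % n → v i ≠ v j := by
    intro i j hij heq
    have h1 : i % n < n := Nat.mod_lt _ (by omega)
    have h2 : j % n < n := Nat.mod_lt _ (by omega)
    exact ZDAux.getVert_injOn hw h1 h2 hij (Subtype.ext heq)
  have he : ∀ k, v k * v (k+1) = 0 ∨ v (k+1) * v k = 0 := by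
    intro k
    have hklt : k % n < n := Nat.mod_lt _ (by omega)
    have key : (k % n + 1) % n = (k+1) % n := Nat.mod_add_mod k n 1
    by_cases hk : k % n = n - 1
    · have h1 : (k+1) % n = 0 := by
        rw [← key, hk]
        have : n - 1 + 1 = n := by omega
        rw [this, Nat.mod_self]
      have hadj := w.adj_getVert_succ (i := n - 1) (by omega)
      have e1 : w.getVert (n - 1 + 1) = w.getVert 0 := by
        have : n - 1 + 1 = n := by omega
        rw [this, SimpleGraph.Walk.getVert_length, SimpleGraph.Walk.getVert_zero]
      rw [e1] at hadj
      have := hadj.2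
      simp only [hv, hk, h1]
      exact this
    · have h1 : (k+1) % n = k % n + 1 := by
        rw [← key]
        exact Nat.mod_eq_of_lt (by omega)
      have hadj := w.adj_getVert_succ (i := k % n) (by omega)
      have := hadj.2
      simp only [hv, h1]
      exact this
  exact ZDAux.core n hn v hper hz hd he hT hQ
end

section
/- Let R be a ring with identity. Then the undirected graph APOḠ(R) is connected with diam(APOḠ(R)) ≤ 3 (any two distinct vertices are joined by a path of length at most 3). Moreover, if APOḠ(R) contains a cycle, then its girth is at most 4. -/
open scoped Pointwise

/-- `I` is a left ideal of the ring `R`: an additive subgroup with `R·I ⊆ I`. -/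
def IsLeftIdeal (R : Type*) [Ring R] (I : AddSubgroup R) : Prop :=
  ∀ r : R, ∀ x ∈ I, r * x ∈ I

/-- `I` is a right ideal of the ring `R`: an additive subgroup with `I·R ⊆ I`. -/
def IsRightIdeal (R : Type*) [Ring R] (I : AddSubgroup R) : Prop :=
  ∀ r : R, ∀ x ∈ I, x * r ∈ I

/-- `I` is a one-sided (left or right) ideal of `R`. -/
def IsOneSidedIdeal (R : Type*) [Ring R] (I : AddSubgroup R) : Prop :=
  IsLeftIdeal R I ∨ IsRightIdeal R I

/-- `IPO(R)`: the set of all products `I*J` of two one-sided ideals of `R`.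
Here `I * J` is the additive subgroup generated by `{a*b : a ∈ I, b ∈ J}`
(the pointwise product of additive subgroups). -/
def IPO (R : Type*) [Ring R] : Set (AddSubgroup R) :=
  {A | ∃ I J : AddSubgroup R, IsOneSidedIdeal R I ∧ IsOneSidedIdeal R J ∧ A = I * J}

/-- `A` is a vertex of `APOG(R) = Γ(IPO(R))`: a nonzero element of `IPO(R)` that is a
one-sided zero-divisor of the semigroup `IPO(R)`. -/
def APOGVertex (R : Type*) [Ring R] (A : AddSubgroup R) : Prop :=
  A ∈ IPO R ∧ A ≠ ⊥ ∧ ∃ B ∈ IPO R, B ≠ ⊥ ∧ (A * B = ⊥ ∨ B * A = ⊥)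

/-- The directed edge `A → B` of `APOG(R)`: both are vertices, `A ≠ B` and `A*B = 0`. -/
def APOGEdge (R : Type*) [Ring R] (A B : AddSubgroup R) : Prop :=
  APOGVertex R A ∧ APOGVertex R B ∧ A ≠ B ∧ A * B = ⊥

/-- The undirected graph `APOḠ(R) = Γ̄(IPO(R))` on the vertex set of `APOG(R)`:
distinct vertices `A, B` are adjacent iff `A*B = 0` or `B*A = 0`. -/
def apogGraph (R : Type*) [Ring R] : SimpleGraph {A : AddSubgroup R // APOGVertex R A} where
  Adj A B := A ≠ B ∧ ((A : AddSubgroup R) * B = ⊥ ∨ (B : AddSubgroup R) * A = ⊥)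
  symm := by constructor; rintro A B ⟨hAB, h⟩; exact ⟨hAB.symm, h.symm⟩
  loopless := by constructor; rintro A ⟨h, -⟩; exact h rfl

namespace APOGAux

section AddSubgroupMul

variable {R : Type*} [Ring R]

theorem mul_le' {M N P : AddSubgroup R} : M * N ≤ P ↔ ∀ m ∈ M, ∀ n ∈ N, m * n ∈ P := by
  rw [← AddSubgroup.toAddSubmonoid_le, AddSubgroup.mul_toAddSubmonoid]
  exact AddSubmonoid.mul_le

theorem mul_mem_mul' {M N : AddSubgroup R} {m n : R} (hm : m ∈ M) (hn : n ∈ N) :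
    m * n ∈ M * N :=
  AddSubmonoid.mul_mem_mul hm hn

theorem mul_assoc' (M N P : AddSubgroup R) : M * N * P = M * (N * P) := by
  apply AddSubgroup.toAddSubmonoid_injective
  simp only [AddSubgroup.mul_toAddSubmonoid]
  exact mul_assoc _ _ _

theorem mul_bot' (M : AddSubgroup R) : M * (⊥ : AddSubgroup R) = ⊥ := by
  apply AddSubgroup.toAddSubmonoid_injective
  simp only [AddSubgroup.mul_toAddSubmonoid]
  exact AddSubmonoid.mul_bot _

theorem bot_mul' (M : AddSubgroup R) : (⊥ : AddSubgroup R) * M = ⊥ := by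
  apply AddSubgroup.toAddSubmonoid_injective
  simp only [AddSubgroup.mul_toAddSubmonoid]
  exact AddSubmonoid.bot_mul _

theorem mul_le_mul' {M N P Q : AddSubgroup R} (h1 : M ≤ P) (h2 : N ≤ Q) : M * N ≤ P * Q := by
  rw [← AddSubgroup.toAddSubmonoid_le]
  simp only [AddSubgroup.mul_toAddSubmonoid]
  exact AddSubmonoid.mul_le_mul h1 h2

theorem le_mul_top (M : AddSubgroup R) : M ≤ M * (⊤ : AddSubgroup R) := fun x hx => by
  simpa using mul_mem_mul' hx (AddSubgroup.mem_top 1)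

theorem le_top_mul (M : AddSubgroup R) : M ≤ (⊤ : AddSubgroup R) * M := fun x hx => by
  simpa using mul_mem_mul' (AddSubgroup.mem_top 1) hx

theorem top_mul_top : (⊤ : AddSubgroup R) * (⊤ : AddSubgroup R) = ⊤ :=
  le_antisymm le_top (le_mul_top _)

end AddSubgroupMul

section IPOLemmas

variable {R : Type*} [Ring R]

theorem top_oneSided : IsOneSidedIdeal R (⊤ : AddSubgroup R) :=
  Or.inl fun _ _ _ => trivial

theorem top_mem_IPO : (⊤ : AddSubgroup R) ∈ IPO R :=
  ⟨⊤, ⊤, top_oneSided, top_oneSided, top_mul_top.symm⟩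

theorem top_mul_of_left {I : AddSubgroup R} (h : IsLeftIdeal R I) :
    (⊤ : AddSubgroup R) * I = I :=
  le_antisymm (mul_le'.2 fun r _ x hx => h r x hx) (le_top_mul I)

theorem mul_top_of_right {I : AddSubgroup R} (h : IsRightIdeal R I) :
    I * (⊤ : AddSubgroup R) = I :=
  le_antisymm (mul_le'.2 fun x hx r _ => h r x hx) (le_mul_top I)

theorem isRightIdeal_mul_top (X : AddSubgroup R) : IsRightIdeal R (X * ⊤) := by
  intro r x hx
  have : x * r ∈ (X * ⊤) * ⊤ := mul_mem_mul' hx (AddSubgroup.mem_top r)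
  rwa [mul_assoc', top_mul_top] at this

theorem isLeftIdeal_top_mul (X : AddSubgroup R) : IsLeftIdeal R (⊤ * X) := by
  intro r x hx
  have : r * x ∈ ⊤ * (⊤ * X) := mul_mem_mul' (AddSubgroup.mem_top r) hx
  rwa [← mul_assoc', top_mul_top] at this

theorem IPO_mul_mem {A B : AddSubgroup R} (hA : A ∈ IPO R) (hB : B ∈ IPO R) :
    A * B ∈ IPO R := by
  obtain ⟨I, J, hI, hJ, rfl⟩ := hA
  obtain ⟨K, L, hK, hL, rfl⟩ := hB
  rcases hL with hL | hL
  · -- L is a left ideal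
    refine ⟨I * J * K * ⊤, L, Or.inr (isRightIdeal_mul_top _), Or.inl hL, ?_⟩
    rw [mul_assoc' (I * J * K) ⊤ L, top_mul_of_left hL]
    simp only [mul_assoc']
  · rcases hI with hI | hI
    · -- I is a left ideal, L is a right ideal : A*B is a left ideal
      have hX1 : (⊤ : AddSubgroup R) * (I * J * (K * L)) = I * J * (K * L) := by
        rw [← mul_assoc' ⊤ (I*J) (K*L), ← mul_assoc' ⊤ I J, top_mul_of_left hI]
      have hlft : IsLeftIdeal R (I * J * (K * L)) := by
        intro r x hx
        have : r * x ∈ ⊤ * (I * J * (K * L)) := mul_mem_mul' (AddSubgroup.mem_top r) hx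
        rwa [hX1] at this
      refine ⟨I * J * (K * L), ⊤, Or.inl hlft, top_oneSided, ?_⟩
      rw [mul_assoc' (I*J) (K*L) ⊤, mul_assoc' K L ⊤, mul_top_of_right hL, mul_assoc']
    · -- I is a right ideal
      refine ⟨I, ⊤ * (J * (K * L)), Or.inr hI, Or.inl (isLeftIdeal_top_mul _), ?_⟩
      rw [← mul_assoc' I ⊤ _, mul_top_of_right hI]
      simp only [mul_assoc']

theorem oneSided_mem_IPO {I : AddSubgroup R} (h : IsOneSidedIdeal R I) : I ∈ IPO R := by
  rcases h with h | h
  · exact ⟨⊤, I, top_oneSided, Or.inl h, (top_mul_of_left h).symm⟩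
  · exact ⟨I, ⊤, Or.inr h, top_oneSided, (mul_top_of_right h).symm⟩

end IPOLemmas


section GenericGraph

open SimpleGraph

variable {α : Type*} {G : SimpleGraph α}

theorem girth_le_cycle {a : α} {w : G.Walk a a} (hw : w.IsCycle) : G.girth ≤ w.length := by
  have h1 : G.egirth ≤ (w.length : ℕ∞) := le_egirth.mp le_rfl a w hw
  have := ENat.toNat_le_toNat h1 (ENat.coe_ne_top _)
  simpa [SimpleGraph.girth] using this

theorem sym2_ne {β : Type*} {x y z t : β} (h1 : ¬(x = z ∧ y = t)) (h2 : ¬(x = t ∧ y = z)) :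
    s(x,y) ≠ s(z,t) := by
  rw [Ne, Sym2.eq_iff]; tauto

theorem girth_le_three {a b c : α} (hab : G.Adj a b) (hbc : G.Adj b c) (hca : G.Adj c a) :
    G.girth ≤ 3 := by
  have hcyc : (SimpleGraph.Walk.cons hab
      (SimpleGraph.Walk.cons hbc (SimpleGraph.Walk.cons hca SimpleGraph.Walk.nil))).IsCycle := by
    rw [SimpleGraph.Walk.cons_isCycle_iff]
    constructor
    · rw [SimpleGraph.Walk.cons_isPath_iff]
      refine ⟨?_, ?_⟩
      · rw [SimpleGraph.Walk.cons_isPath_iff]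
        exact ⟨SimpleGraph.Walk.IsPath.nil, by simp [hca.ne]⟩
      · simp [hbc.ne, hab.ne']
    · simp only [SimpleGraph.Walk.edges_cons, SimpleGraph.Walk.edges_nil, List.mem_cons,
        List.not_mem_nil, or_false, List.mem_singleton]
      push_neg
      constructor
      · exact sym2_ne (fun h => hab.ne h.1) (fun h => hca.ne h.1.symm)
      · exact sym2_ne (fun h => hca.ne h.1.symm) (fun h => hbc.ne h.2)
  calc G.girth ≤ _ := girth_le_cycle hcyc
    _ ≤ 3 := by simp

theorem girth_le_four {a b c d : α} (hab : G.Adj a b) (hbc : G.Adj b c) (hcd : G.Adj c d)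
    (hda : G.Adj d a) (hac : a ≠ c) (hbd : b ≠ d) : G.girth ≤ 4 := by
  have hcyc : (SimpleGraph.Walk.cons hab (SimpleGraph.Walk.cons hbc
      (SimpleGraph.Walk.cons hcd (SimpleGraph.Walk.cons hda SimpleGraph.Walk.nil)))).IsCycle := by
    rw [SimpleGraph.Walk.cons_isCycle_iff]
    constructor
    · rw [SimpleGraph.Walk.cons_isPath_iff]
      refine ⟨?_, ?_⟩
      · rw [SimpleGraph.Walk.cons_isPath_iff]
        refine ⟨?_, ?_⟩
        · rw [SimpleGraph.Walk.cons_isPath_iff]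
          exact ⟨SimpleGraph.Walk.IsPath.nil, by simp [hda.ne]⟩
        · simp [hcd.ne, hac.symm]
      · simp [hbc.ne, hbd, hab.ne']
    · simp only [SimpleGraph.Walk.edges_cons, SimpleGraph.Walk.edges_nil, List.mem_cons,
        List.not_mem_nil, or_false]
      push_neg
      refine ⟨?_, ?_, ?_⟩
      · exact sym2_ne (fun h => hab.ne h.1) (fun h => hac h.1)
      · exact sym2_ne (fun h => hac h.1) (fun h => hbc.ne h.2)
      · exact sym2_ne (fun h => hab.ne' h.2) (fun h => hbd h.2)
  calc G.girth ≤ _ := girth_le_cycle hcyc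
    _ ≤ 4 := by simp

theorem walk_getVert_eq_support_getElem {u v : α} (p : G.Walk u v) (i : ℕ)
    (h : i < p.support.length) : p.getVert i = p.support[i] := by
  induction p generalizing i with
  | nil =>
    have : i = 0 := by simp at h; omega
    subst this
    simp [SimpleGraph.Walk.getVert]
  | cons hadj q ih =>
    cases i with
    | zero => simp
    | succ j =>
      simp only [SimpleGraph.Walk.support_cons, List.getElem_cons_succ]
      rw [SimpleGraph.Walk.getVert_cons_succ]
      exact ih j (by simpa using h)

theorem cycle_getVert_injOn {a : α} {w : G.Walk a a} (hw : w.IsCycle) :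
    ∀ i j, i < w.length → j < w.length → w.getVert i = w.getVert j → i = j := by
  intro i j hi hj hij
  have hlen : w.support.length = w.length + 1 := SimpleGraph.Walk.length_support w
  have htail : w.support.tail.Nodup := hw.2
  have hcons : w.support = a :: w.support.tail := SimpleGraph.Walk.support_eq_cons w
  have htl : w.support.tail.length = w.length := by
    have h0 := congrArg List.length hcons
    rw [hlen] at h0
    simp only [List.length_cons] at h0
    omega
  have hget : ∀ m (hm : m < w.support.tail.length), w.getVert (m+1) = w.support.tail[m] := by
    intro m hm
    have h1 := walk_getVert_eq_support_getElem w (m+1) (by omega)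
    rw [h1, List.getElem_of_eq hcons (by omega), List.getElem_cons_succ]
  have h3 := hw.three_le_length
  have hlast : w.getVert w.length = w.support.tail[w.length - 1]'(by omega) := by
    have h1 := hget (w.length - 1) (by omega)
    rwa [show w.length - 1 + 1 = w.length by omega] at h1
  rcases Nat.eq_zero_or_pos i with rfl | hi1 <;> rcases Nat.eq_zero_or_pos j with rfl | hj1
  · rfl
  · exfalso
    obtain ⟨m, rfl⟩ : ∃ m, j = m + 1 := ⟨j - 1, by omega⟩
    rw [SimpleGraph.Walk.getVert_zero, hget m (by omega)] at hij
    have h2 : w.getVert 0 = a := SimpleGraph.Walk.getVert_zero w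
    have h4 : w.getVert w.length = a := SimpleGraph.Walk.getVert_length w
    rw [h4] at hlast
    have := (List.Nodup.getElem_inj_iff htail).mp (hij.symm.trans hlast)
    omega
  · exfalso
    obtain ⟨m, rfl⟩ : ∃ m, i = m + 1 := ⟨i - 1, by omega⟩
    rw [SimpleGraph.Walk.getVert_zero, hget m (by omega)] at hij
    have h4 : w.getVert w.length = a := SimpleGraph.Walk.getVert_length w
    rw [h4] at hlast
    have := (List.Nodup.getElem_inj_iff htail).mp (hij.trans hlast)
    omega
  · obtain ⟨m, rfl⟩ : ∃ m, i = m + 1 := ⟨i - 1, by omega⟩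
    obtain ⟨m', rfl⟩ : ∃ m', j = m' + 1 := ⟨j - 1, by omega⟩
    rw [hget m (by omega), hget m' (by omega)] at hij
    have := (List.Nodup.getElem_inj_iff htail).mp hij
    omega

end GenericGraph

section Graph

variable {R : Type*} [Ring R]

local notation "V" => {A : AddSubgroup R // APOGVertex R A}

/-- A "step": equal or adjacent. -/
def Step (u v : V) : Prop := u = v ∨ (apogGraph R).Adj u v

theorem mkStep {u v : V} (h : (u : AddSubgroup R) * v = ⊥ ∨ (v : AddSubgroup R) * u = ⊥) :
    Step u v := by
  by_cases huv : u = v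
  · exact Or.inl huv
  · exact Or.inr ⟨huv, h⟩

theorem Step.reachable {u v : V} (h : Step u v) : (apogGraph R).Reachable u v := by
  rcases h with rfl | h
  · exact SimpleGraph.Reachable.refl u
  · exact h.reachable

/-- From a 3-chain of steps we get reachability and distance at most 3. -/
theorem step3_dist {u b c v : V} (h1 : Step u b) (h2 : Step b c) (h3 : Step c v) :
    (apogGraph R).Reachable u v ∧ (apogGraph R).dist u v ≤ 3 := by
  have hr : (apogGraph R).Reachable u v := (h1.reachable.trans h2.reachable).trans h3.reachable
  refine ⟨hr, ?_⟩
  rcases h1 with rfl | h1 <;> rcases h2 with rfl | h2 <;> rcases h3 with rfl | h3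
  · simp [SimpleGraph.dist_self]
  · exact le_trans (SimpleGraph.dist_le h3.toWalk) (by simp)
  · exact le_trans (SimpleGraph.dist_le h2.toWalk) (by simp)
  · exact le_trans (SimpleGraph.dist_le (SimpleGraph.Walk.cons h2 h3.toWalk)) (by simp)
  · exact le_trans (SimpleGraph.dist_le h1.toWalk) (by simp)
  · exact le_trans (SimpleGraph.dist_le (SimpleGraph.Walk.cons h1 h3.toWalk)) (by simp)
  · exact le_trans (SimpleGraph.dist_le (SimpleGraph.Walk.cons h1 h2.toWalk)) (by simp)
  · exact le_trans
      (SimpleGraph.dist_le (SimpleGraph.Walk.cons h1 (SimpleGraph.Walk.cons h2 h3.toWalk)))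
      (by simp)

/-- The key diameter lemma: between any two vertices there is a chain of at most 3 steps. -/
theorem exists_chain (u v : V) :
    ∃ b c : V, Step u b ∧ Step b c ∧ Step c v := by
  obtain ⟨hAipo, hAne, CA, hCipo, hCne, hCprod⟩ := u.2
  obtain ⟨hBipo, hBne, DB, hDipo, hDne, hDprod⟩ := v.2
  set A := (u : AddSubgroup R) with hA
  set B := (v : AddSubgroup R) with hB
  by_cases hdir : A * B = ⊥ ∨ B * A = ⊥
  · exact ⟨v, v, mkStep hdir, Or.inl rfl, Or.inl rfl⟩
  push_neg at hdir
  -- witnesses as vertices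
  have hCvert : APOGVertex R CA := ⟨hCipo, hCne, A, hAipo, hAne, hCprod.symm⟩
  have hDvert : APOGVertex R DB := ⟨hDipo, hDne, B, hBipo, hBne, hDprod.symm⟩
  rcases hCprod with hC | hC <;> rcases hDprod with hD | hD
  · -- A*CA = ⊥ and B*DB = ⊥ ; u := CA * B
    by_cases hZ : CA * B = ⊥
    · exact ⟨⟨CA, hCvert⟩, v, mkStep (Or.inl hC), mkStep (Or.inl hZ), Or.inl rfl⟩
    · have hZipo : CA * B ∈ IPO R := IPO_mul_mem hCipo hBipo
      have hZu : A * (CA * B) = ⊥ := by rw [← mul_assoc', hC, bot_mul']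
      have hZD : (CA * B) * DB = ⊥ := by rw [mul_assoc', hD, mul_bot']
      have hZvert : APOGVertex R (CA * B) := ⟨hZipo, hZ, DB, hDipo, hDne, Or.inl hZD⟩
      exact ⟨⟨CA * B, hZvert⟩, ⟨DB, hDvert⟩, mkStep (Or.inl hZu), mkStep (Or.inl hZD),
        mkStep (Or.inr hD)⟩
  · -- A*CA = ⊥ and DB*B = ⊥ ; middle CA*DB
    by_cases hZ : CA * DB = ⊥
    · exact ⟨⟨CA, hCvert⟩, ⟨DB, hDvert⟩, mkStep (Or.inl hC), mkStep (Or.inl hZ),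
        mkStep (Or.inl hD)⟩
    · have hZipo : CA * DB ∈ IPO R := IPO_mul_mem hCipo hDipo
      have hZu : A * (CA * DB) = ⊥ := by rw [← mul_assoc', hC, bot_mul']
      have hZv : (CA * DB) * B = ⊥ := by rw [mul_assoc', hD, mul_bot']
      have hZvert : APOGVertex R (CA * DB) := ⟨hZipo, hZ, B, hBipo, hBne, Or.inl hZv⟩
      exact ⟨⟨CA * DB, hZvert⟩, v, mkStep (Or.inl hZu), mkStep (Or.inl hZv), Or.inl rfl⟩
  · -- CA*A = ⊥ and B*DB = ⊥ ; middle DB*CA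
    by_cases hZ : DB * CA = ⊥
    · exact ⟨⟨CA, hCvert⟩, ⟨DB, hDvert⟩, mkStep (Or.inr hC), mkStep (Or.inr hZ),
        mkStep (Or.inr hD)⟩
    · have hZipo : DB * CA ∈ IPO R := IPO_mul_mem hDipo hCipo
      have hZu : (DB * CA) * A = ⊥ := by rw [mul_assoc', hC, mul_bot']
      have hZv : B * (DB * CA) = ⊥ := by rw [← mul_assoc', hD, bot_mul']
      have hZvert : APOGVertex R (DB * CA) := ⟨hZipo, hZ, A, hAipo, hAne, Or.inl hZu⟩
      exact ⟨⟨DB * CA, hZvert⟩, v, mkStep (Or.inr hZu), mkStep (Or.inr hZv), Or.inl rfl⟩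
  · -- CA*A = ⊥ and DB*B = ⊥ ; u := B * CA
    by_cases hZ : B * CA = ⊥
    · exact ⟨⟨CA, hCvert⟩, v, mkStep (Or.inr hC), mkStep (Or.inr hZ), Or.inl rfl⟩
    · have hZipo : B * CA ∈ IPO R := IPO_mul_mem hBipo hCipo
      have hZu : (B * CA) * A = ⊥ := by rw [mul_assoc', hC, mul_bot']
      have hZD : DB * (B * CA) = ⊥ := by rw [← mul_assoc', hD, bot_mul']
      have hZvert : APOGVertex R (B * CA) := ⟨hZipo, hZ, A, hAipo, hAne, Or.inl hZu⟩
      exact ⟨⟨B * CA, hZvert⟩, ⟨DB, hDvert⟩, mkStep (Or.inr hZu), mkStep (Or.inr hZD),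
        mkStep (Or.inl hD)⟩

end Graph

section GirthCore

variable {R : Type*} [Ring R]

theorem natCast_ne_zero_zmod {n : ℕ} {k : ℕ} (h1 : 0 < k) (h2 : k < n) :
    (k : ZMod n) ≠ 0 := by
  haveI : NeZero n := ⟨by omega⟩
  intro h
  have hv := ZMod.val_cast_of_lt h2
  rw [h, ZMod.val_zero] at hv
  omega

theorem ne_add_natCast {n : ℕ} (i : ZMod n) {k : ℕ} (h1 : 0 < k) (h2 : k < n) :
    i ≠ i + (k : ZMod n) := by
  intro h
  exact natCast_ne_zero_zmod h1 h2 (left_eq_add.mp h)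

theorem zmod_ne_add1 {n : ℕ} (hn5 : 5 ≤ n) (i : ZMod n) : i ≠ i + 1 := by
  have := ne_add_natCast i (k := 1) (by omega) (by omega)
  simpa using this

theorem zmod_ne_add2 {n : ℕ} (hn5 : 5 ≤ n) (i : ZMod n) : i ≠ i + 2 := by
  have h := ne_add_natCast i (k := 2) (by omega) (by omega)
  have e : ((2 : ℕ) : ZMod n) = (2 : ZMod n) := by push_cast; ring
  rwa [e] at h

theorem zmod_ne_add3 {n : ℕ} (hn5 : 5 ≤ n) (i : ZMod n) : i ≠ i + 3 := by
  have h := ne_add_natCast i (k := 3) (by omega) (by omega)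
  have e : ((3 : ℕ) : ZMod n) = (3 : ZMod n) := by push_cast; ring
  rwa [e] at h

/-- The ambient data for the girth argument: a graph cycle of length `n ≥ 5` in `apogGraph R`
together with the assumption that there are no cycles of length 3 or 4. -/
structure CycleSetup (R : Type*) [Ring R] (n : ℕ) : Type _ where
  hn5 : 5 ≤ n
  hT : ∀ x y z : {A : AddSubgroup R // APOGVertex R A},
    (apogGraph R).Adj x y → (apogGraph R).Adj y z → (apogGraph R).Adj z x → False
  hQ : ∀ x y z t : {A : AddSubgroup R // APOGVertex R A},
    (apogGraph R).Adj x y → (apogGraph R).Adj y z → (apogGraph R).Adj z t →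
    (apogGraph R).Adj t x → x ≠ z → y ≠ t → False
  y : ZMod n → {A : AddSubgroup R // APOGVertex R A}
  hadj : ∀ i, (apogGraph R).Adj (y i) (y (i+1))
  hinj : Function.Injective y

namespace CycleSetup

variable {n : ℕ} (S : CycleSetup R n)

theorem yne {i j : ZMod n} (h : i ≠ j) : S.y i ≠ S.y j := fun hy => h (S.hinj hy)

theorem notAdj2 (i : ZMod n) : ¬ (apogGraph R).Adj (S.y i) (S.y (i+2)) := by
  intro h
  have h2 := S.hadj (i+1)
  rw [show i+1+1 = i+2 by ring] at h2
  exact S.hT (S.y i) (S.y (i+1)) (S.y (i+2)) (S.hadj i) h2 h.symm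

theorem notAdj3 (i : ZMod n) : ¬ (apogGraph R).Adj (S.y i) (S.y (i+3)) := by
  intro h
  have h2 := S.hadj (i+1)
  rw [show i+1+1 = i+2 by ring] at h2
  have h3 := S.hadj (i+2)
  rw [show i+2+1 = i+3 by ring] at h3
  have hne13 : S.y (i+1) ≠ S.y (i+3) := by
    apply S.yne
    rw [show i+3 = (i+1)+2 by ring]
    exact (zmod_ne_add2 S.hn5) (i+1)
  exact S.hQ (S.y i) (S.y (i+1)) (S.y (i+2)) (S.y (i+3)) (S.hadj i) h2 h3 h.symm
    (S.yne ((zmod_ne_add2 S.hn5) i)) hne13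

theorem mkAdj {u v : {A : AddSubgroup R // APOGVertex R A}} (hne : u ≠ v)
    (h : (u : AddSubgroup R) * v = ⊥ ∨ (v : AddSubgroup R) * u = ⊥) : (apogGraph R).Adj u v :=
  ⟨hne, h⟩

/-- Mixed pair rule at center `i+1`. -/
theorem pairRule (i : ZMod n) (Z : AddSubgroup R) (hipo : Z ∈ IPO R)
    (h1 : (S.y i : AddSubgroup R) * Z = ⊥) (h2 : Z * (S.y (i+2) : AddSubgroup R) = ⊥) :
    Z = ⊥ ∨ Z = (S.y (i+1) : AddSubgroup R) := by
  by_cases hZ0 : Z = ⊥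
  · exact Or.inl hZ0
  right
  by_contra hZc
  by_cases hzi : Z = (S.y i : AddSubgroup R)
  · exact S.notAdj2 i (mkAdj (S.yne ((zmod_ne_add2 S.hn5) i)) (Or.inl (by rw [hzi] at h2; exact h2)))
  by_cases hzi2 : Z = (S.y (i+2) : AddSubgroup R)
  · exact S.notAdj2 i (mkAdj (S.yne ((zmod_ne_add2 S.hn5) i)) (Or.inl (by rw [hzi2] at h1; exact h1)))
  have hvert : APOGVertex R Z :=
    ⟨hipo, hZ0, (S.y i : AddSubgroup R), (S.y i).2.1, (S.y i).2.2.1, Or.inr h1⟩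
  set zv : {A : AddSubgroup R // APOGVertex R A} := ⟨Z, hvert⟩ with hzv
  have e2 := S.hadj (i+1)
  rw [show i+1+1 = i+2 by ring] at e2
  refine S.hQ (S.y i) zv (S.y (i+2)) (S.y (i+1)) ?_ ?_ e2.symm (S.hadj i).symm
    (S.yne ((zmod_ne_add2 S.hn5) i)) ?_
  · exact mkAdj (fun e => hzi (congrArg Subtype.val e).symm) (Or.inl h1)
  · exact mkAdj (fun e => hzi2 (congrArg Subtype.val e)) (Or.inl h2)
  · exact fun e => hZc (congrArg Subtype.val e)

/-- Left pair rule at center `i+1` : anything killing `y i` and `y (i+2)` from the left. -/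
theorem pairRuleLeft (i : ZMod n) (Z : AddSubgroup R) (hipo : Z ∈ IPO R)
    (h1 : Z * (S.y i : AddSubgroup R) = ⊥) (h2 : Z * (S.y (i+2) : AddSubgroup R) = ⊥) :
    Z = ⊥ ∨ Z = (S.y (i+1) : AddSubgroup R) := by
  by_cases hZ0 : Z = ⊥
  · exact Or.inl hZ0
  right
  by_contra hZc
  by_cases hzi : Z = (S.y i : AddSubgroup R)
  · exact S.notAdj2 i (mkAdj (S.yne ((zmod_ne_add2 S.hn5) i)) (Or.inl (by rw [hzi] at h2; exact h2)))
  by_cases hzi2 : Z = (S.y (i+2) : AddSubgroup R)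
  · exact S.notAdj2 i (mkAdj (S.yne ((zmod_ne_add2 S.hn5) i)) (Or.inr (by rw [hzi2] at h1; exact h1)))
  have hvert : APOGVertex R Z :=
    ⟨hipo, hZ0, (S.y i : AddSubgroup R), (S.y i).2.1, (S.y i).2.2.1, Or.inl h1⟩
  set zv : {A : AddSubgroup R // APOGVertex R A} := ⟨Z, hvert⟩ with hzv
  have e2 := S.hadj (i+1)
  rw [show i+1+1 = i+2 by ring] at e2
  refine S.hQ (S.y i) zv (S.y (i+2)) (S.y (i+1)) ?_ ?_ e2.symm (S.hadj i).symm
    (S.yne ((zmod_ne_add2 S.hn5) i)) ?_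
  · exact mkAdj (fun e => hzi (congrArg Subtype.val e).symm) (Or.inr h1)
  · exact mkAdj (fun e => hzi2 (congrArg Subtype.val e)) (Or.inl h2)
  · exact fun e => hZc (congrArg Subtype.val e)

/-- Right pair rule at center `i+1` : anything killed by `y i` and `y (i+2)` from the left. -/
theorem pairRuleRight (i : ZMod n) (Z : AddSubgroup R) (hipo : Z ∈ IPO R)
    (h1 : (S.y i : AddSubgroup R) * Z = ⊥) (h2 : (S.y (i+2) : AddSubgroup R) * Z = ⊥) :
    Z = ⊥ ∨ Z = (S.y (i+1) : AddSubgroup R) := by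
  by_cases hZ0 : Z = ⊥
  · exact Or.inl hZ0
  right
  by_contra hZc
  by_cases hzi : Z = (S.y i : AddSubgroup R)
  · exact S.notAdj2 i (mkAdj (S.yne ((zmod_ne_add2 S.hn5) i)) (Or.inr (by rw [hzi] at h2; exact h2)))
  by_cases hzi2 : Z = (S.y (i+2) : AddSubgroup R)
  · exact S.notAdj2 i (mkAdj (S.yne ((zmod_ne_add2 S.hn5) i)) (Or.inl (by rw [hzi2] at h1; exact h1)))
  have hvert : APOGVertex R Z :=
    ⟨hipo, hZ0, (S.y i : AddSubgroup R), (S.y i).2.1, (S.y i).2.2.1, Or.inr h1⟩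
  set zv : {A : AddSubgroup R // APOGVertex R A} := ⟨Z, hvert⟩ with hzv
  have e2 := S.hadj (i+1)
  rw [show i+1+1 = i+2 by ring] at e2
  refine S.hQ (S.y i) zv (S.y (i+2)) (S.y (i+1)) ?_ ?_ e2.symm (S.hadj i).symm
    (S.yne ((zmod_ne_add2 S.hn5) i)) ?_
  · exact mkAdj (fun e => hzi (congrArg Subtype.val e).symm) (Or.inl h1)
  · exact mkAdj (fun e => hzi2 (congrArg Subtype.val e)) (Or.inr h2)
  · exact fun e => hZc (congrArg Subtype.val e)

/-- Case I : some `y (i+1)` kills both its neighbours. -/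
theorem caseI (i : ZMod n) (h1 : (S.y (i+1) : AddSubgroup R) * (S.y i : AddSubgroup R) = ⊥)
    (h2 : (S.y (i+1) : AddSubgroup R) * (S.y (i+2) : AddSubgroup R) = ⊥) : False := by
  have rule : ∀ s : AddSubgroup R, s ∈ IPO R →
      s * (S.y (i+1) : AddSubgroup R) = ⊥ ∨
      s * (S.y (i+1) : AddSubgroup R) = (S.y (i+1) : AddSubgroup R) := by
    intro s hs
    apply S.pairRuleLeft i _ (IPO_mul_mem hs (S.y (i+1)).2.1)
    · rw [mul_assoc', h1, mul_bot']
    · rw [mul_assoc', h2, mul_bot']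
  have h3 : (S.y (i+3) : AddSubgroup R) * (S.y (i+1) : AddSubgroup R) =
      (S.y (i+1) : AddSubgroup R) := by
    rcases rule _ (S.y (i+3)).2.1 with h | h
    · exfalso
      apply S.notAdj2 (i+1)
      rw [show i+1+2 = i+3 by ring]
      exact mkAdj (S.yne (by rw [show i+3 = (i+1)+2 by ring]; exact (zmod_ne_add2 S.hn5) (i+1))) (Or.inr h)
    · exact h
  have h4 : (S.y (i+4) : AddSubgroup R) * (S.y (i+1) : AddSubgroup R) =
      (S.y (i+1) : AddSubgroup R) := by
    rcases rule _ (S.y (i+4)).2.1 with h | h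
    · exfalso
      apply S.notAdj3 (i+1)
      rw [show i+1+3 = i+4 by ring]
      exact mkAdj (S.yne (by rw [show i+4 = (i+1)+3 by ring]; exact (zmod_ne_add3 S.hn5) (i+1))) (Or.inr h)
    · exact h
  have hedge := S.hadj (i+3)
  rw [show i+3+1 = i+4 by ring] at hedge
  have hbot : (S.y (i+1) : AddSubgroup R) ≠ ⊥ := (S.y (i+1)).2.2.1
  rcases hedge.2 with h | h
  · apply hbot
    calc (S.y (i+1) : AddSubgroup R)
        = (S.y (i+3) : AddSubgroup R) * (S.y (i+1) : AddSubgroup R) := h3.symm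
      _ = (S.y (i+3) : AddSubgroup R) *
          ((S.y (i+4) : AddSubgroup R) * (S.y (i+1) : AddSubgroup R)) := by rw [h4]
      _ = ((S.y (i+3) : AddSubgroup R) * (S.y (i+4) : AddSubgroup R)) *
          (S.y (i+1) : AddSubgroup R) := (mul_assoc' _ _ _).symm
      _ = ⊥ := by rw [h, bot_mul']
  · apply hbot
    calc (S.y (i+1) : AddSubgroup R)
        = (S.y (i+4) : AddSubgroup R) * (S.y (i+1) : AddSubgroup R) := h4.symm
      _ = (S.y (i+4) : AddSubgroup R) *
          ((S.y (i+3) : AddSubgroup R) * (S.y (i+1) : AddSubgroup R)) := by rw [h3]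
      _ = ((S.y (i+4) : AddSubgroup R) * (S.y (i+3) : AddSubgroup R)) *
          (S.y (i+1) : AddSubgroup R) := (mul_assoc' _ _ _).symm
      _ = ⊥ := by rw [h, bot_mul']

/-- Case I' : some `y (i+1)` is killed by both its neighbours. -/
theorem caseI' (i : ZMod n) (h1 : (S.y i : AddSubgroup R) * (S.y (i+1) : AddSubgroup R) = ⊥)
    (h2 : (S.y (i+2) : AddSubgroup R) * (S.y (i+1) : AddSubgroup R) = ⊥) : False := by
  have rule : ∀ s : AddSubgroup R, s ∈ IPO R →
      (S.y (i+1) : AddSubgroup R) * s = ⊥ ∨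
      (S.y (i+1) : AddSubgroup R) * s = (S.y (i+1) : AddSubgroup R) := by
    intro s hs
    apply S.pairRuleRight i _ (IPO_mul_mem (S.y (i+1)).2.1 hs)
    · rw [← mul_assoc', h1, bot_mul']
    · rw [← mul_assoc', h2, bot_mul']
  have h3 : (S.y (i+1) : AddSubgroup R) * (S.y (i-1) : AddSubgroup R) =
      (S.y (i+1) : AddSubgroup R) := by
    rcases rule _ (S.y (i-1)).2.1 with h | h
    · exfalso
      apply S.notAdj2 (i-1)
      rw [show i-1+2 = i+1 by ring]
      exact mkAdj (S.yne (by rw [show i+1 = (i-1)+2 by ring]; exact (zmod_ne_add2 S.hn5) (i-1))) (Or.inr h)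
    · exact h
  have h4 : (S.y (i+1) : AddSubgroup R) * (S.y (i-2) : AddSubgroup R) =
      (S.y (i+1) : AddSubgroup R) := by
    rcases rule _ (S.y (i-2)).2.1 with h | h
    · exfalso
      apply S.notAdj3 (i-2)
      rw [show i-2+3 = i+1 by ring]
      exact mkAdj (S.yne (by rw [show i+1 = (i-2)+3 by ring]; exact (zmod_ne_add3 S.hn5) (i-2))) (Or.inr h)
    · exact h
  have hedge := S.hadj (i-2)
  rw [show i-2+1 = i-1 by ring] at hedge
  have hbot : (S.y (i+1) : AddSubgroup R) ≠ ⊥ := (S.y (i+1)).2.2.1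
  rcases hedge.2 with h | h
  · apply hbot
    calc (S.y (i+1) : AddSubgroup R)
        = (S.y (i+1) : AddSubgroup R) * (S.y (i-1) : AddSubgroup R) := h3.symm
      _ = ((S.y (i+1) : AddSubgroup R) * (S.y (i-2) : AddSubgroup R)) *
          (S.y (i-1) : AddSubgroup R) := by rw [h4]
      _ = (S.y (i+1) : AddSubgroup R) *
          ((S.y (i-2) : AddSubgroup R) * (S.y (i-1) : AddSubgroup R)) := mul_assoc' _ _ _
      _ = ⊥ := by rw [h, mul_bot']
  · apply hbot
    calc (S.y (i+1) : AddSubgroup R)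
        = (S.y (i+1) : AddSubgroup R) * (S.y (i-2) : AddSubgroup R) := h4.symm
      _ = ((S.y (i+1) : AddSubgroup R) * (S.y (i-1) : AddSubgroup R)) *
          (S.y (i-2) : AddSubgroup R) := by rw [h3]
      _ = (S.y (i+1) : AddSubgroup R) *
          ((S.y (i-1) : AddSubgroup R) * (S.y (i-2) : AddSubgroup R)) := mul_assoc' _ _ _
      _ = ⊥ := by rw [h, mul_bot']

/-- The directed case: all consecutive products vanish in the same direction. -/
theorem dirCase (hdir : ∀ i, (S.y i : AddSubgroup R) * (S.y (i+1) : AddSubgroup R) = ⊥) :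
    False := by
  have hdir' : ∀ i : ZMod n, (S.y (i+1) : AddSubgroup R) * (S.y (i+2) : AddSubgroup R) = ⊥ := by
    intro i
    have := hdir (i+1)
    rwa [show i+1+1 = i+2 by ring] at this
  have hR : ∀ i : ZMod n, (S.y (i+1) : AddSubgroup R) * (S.y i : AddSubgroup R) ≠ ⊥ := by
    intro i h
    exact S.caseI i h (hdir' i)
  have hD : ∀ i : ZMod n,
      (S.y (i+1) : AddSubgroup R) * (S.y i : AddSubgroup R) = (S.y i : AddSubgroup R) ∨
      (S.y (i+1) : AddSubgroup R) * (S.y i : AddSubgroup R) = (S.y (i+1) : AddSubgroup R) := by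
    intro i
    have hd1 : (S.y i : AddSubgroup R) *
        ((S.y (i+1) : AddSubgroup R) * (S.y i : AddSubgroup R)) = ⊥ := by
      rw [← mul_assoc', hdir i, bot_mul']
    have hd2 : ((S.y (i+1) : AddSubgroup R) * (S.y i : AddSubgroup R)) *
        (S.y (i+1) : AddSubgroup R) = ⊥ := by
      rw [mul_assoc', hdir i, mul_bot']
    by_contra hc
    push_neg at hc
    obtain ⟨hne1, hne2⟩ := hc
    have hipo : (S.y (i+1) : AddSubgroup R) * (S.y i : AddSubgroup R) ∈ IPO R :=
      IPO_mul_mem (S.y (i+1)).2.1 (S.y i).2.1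
    have hvert : APOGVertex R ((S.y (i+1) : AddSubgroup R) * (S.y i : AddSubgroup R)) :=
      ⟨hipo, hR i, (S.y (i+1) : AddSubgroup R), (S.y (i+1)).2.1, (S.y (i+1)).2.2.1,
        Or.inl hd2⟩
    exact S.hT (S.y i) ⟨_, hvert⟩ (S.y (i+1))
      (mkAdj (fun e => hne1 (congrArg Subtype.val e).symm) (Or.inl hd1))
      (mkAdj (fun e => hne2 (congrArg Subtype.val e)) (Or.inl hd2))
      (S.hadj i).symm
  have noLL : ∀ i : ZMod n,
      (S.y (i+1) : AddSubgroup R) * (S.y i : AddSubgroup R) = (S.y i : AddSubgroup R) →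
      (S.y (i+2) : AddSubgroup R) * (S.y (i+1) : AddSubgroup R) = (S.y (i+1) : AddSubgroup R) →
      False := by
    intro i hLi hLj
    apply hR i
    have key : (S.y i : AddSubgroup R) =
        (S.y (i+2) : AddSubgroup R) * (S.y i : AddSubgroup R) := by
      conv_lhs => rw [← hLi, ← hLj]
      rw [mul_assoc', hLi]
    conv_lhs => rw [key, ← mul_assoc', hdir' i]
    rw [bot_mul']
  have noRR : ∀ i : ZMod n,
      (S.y (i+1) : AddSubgroup R) * (S.y i : AddSubgroup R) = (S.y (i+1) : AddSubgroup R) →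
      (S.y (i+2) : AddSubgroup R) * (S.y (i+1) : AddSubgroup R) = (S.y (i+2) : AddSubgroup R) →
      False := by
    intro i hRi hRj
    apply hR (i+1)
    rw [show i+1+1 = i+2 by ring]
    have key : (S.y (i+2) : AddSubgroup R) =
        (S.y (i+2) : AddSubgroup R) * (S.y i : AddSubgroup R) := by
      conv_lhs => rw [← hRj, ← hRi]
      rw [← mul_assoc', hRj]
    conv_lhs => rw [key, mul_assoc', hdir i]
    rw [mul_bot']
  have hKILL : ∀ i : ZMod n,
      (S.y (i+1) : AddSubgroup R) * (S.y i : AddSubgroup R) = (S.y i : AddSubgroup R) →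
      (S.y (i+2) : AddSubgroup R) * (S.y (i+1) : AddSubgroup R) = (S.y (i+2) : AddSubgroup R) →
      False := by
    intro i hL hRr
    have hsq : (S.y (i+2) : AddSubgroup R) * (S.y (i+2) : AddSubgroup R) = ⊥ := by
      conv_lhs => rw [← hRr]
      rw [mul_assoc' ((S.y (i+2) : AddSubgroup R)) ((S.y (i+1) : AddSubgroup R)) _,
        ← mul_assoc' ((S.y (i+1) : AddSubgroup R)) ((S.y (i+2) : AddSubgroup R))
          ((S.y (i+1) : AddSubgroup R)),
        hdir' i, bot_mul', mul_bot']
    have hW1 : (S.y i : AddSubgroup R) *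
        ((S.y (i+1) : AddSubgroup R) * ⊤ * (S.y (i+2) : AddSubgroup R)) = ⊥ := by
      simp only [← mul_assoc']
      rw [hdir i, bot_mul', bot_mul']
    have hW2 : ((S.y (i+1) : AddSubgroup R) * ⊤ * (S.y (i+2) : AddSubgroup R)) *
        (S.y (i+2) : AddSubgroup R) = ⊥ := by
      rw [mul_assoc' ((S.y (i+1) : AddSubgroup R) * ⊤) _ _, hsq, mul_bot']
    have hWipo : (S.y (i+1) : AddSubgroup R) * ⊤ * (S.y (i+2) : AddSubgroup R) ∈ IPO R :=
      IPO_mul_mem (IPO_mul_mem (S.y (i+1)).2.1 top_mem_IPO) (S.y (i+2)).2.1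
    rcases S.pairRule i _ hWipo hW1 hW2 with h0 | h1
    · -- W = ⊥, so y(i+1)*⊤ = y(i+1) and we get a chord (i, i+2)
      have hZ1 : (S.y i : AddSubgroup R) * ((S.y (i+1) : AddSubgroup R) * ⊤) = ⊥ := by
        rw [← mul_assoc', hdir i, bot_mul']
      have hZipo : (S.y (i+1) : AddSubgroup R) * ⊤ ∈ IPO R :=
        IPO_mul_mem (S.y (i+1)).2.1 top_mem_IPO
      rcases S.pairRule i _ hZipo hZ1 h0 with hz | hz
      · exact (S.y (i+1)).2.2.1 (le_bot_iff.mp (hz ▸ le_mul_top _))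
      · have hle : (S.y i : AddSubgroup R) ≤ (S.y (i+1) : AddSubgroup R) := by
          rw [← hL]
          calc (S.y (i+1) : AddSubgroup R) * (S.y i : AddSubgroup R)
              ≤ (S.y (i+1) : AddSubgroup R) * ⊤ := mul_le_mul' le_rfl le_top
            _ = (S.y (i+1) : AddSubgroup R) := hz
        have hprod : (S.y i : AddSubgroup R) * (S.y (i+2) : AddSubgroup R) = ⊥ := by
          apply le_bot_iff.mp
          calc (S.y i : AddSubgroup R) * (S.y (i+2) : AddSubgroup R)
              ≤ (S.y (i+1) : AddSubgroup R) * (S.y (i+2) : AddSubgroup R) :=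
              mul_le_mul' hle le_rfl
            _ = ⊥ := hdir' i
        exact S.notAdj2 i (mkAdj (S.yne ((zmod_ne_add2 S.hn5) i)) (Or.inl hprod))
    · -- W = y(i+1) : chord (i+1, i+3)
      have hprod : (S.y (i+1) : AddSubgroup R) * (S.y (i+3) : AddSubgroup R) = ⊥ := by
        rw [← h1, mul_assoc' ((S.y (i+1) : AddSubgroup R) * ⊤) _ _]
        have := hdir (i+2)
        rw [show i+2+1 = i+3 by ring] at this
        rw [this, mul_bot']
      apply S.notAdj2 (i+1)
      rw [show i+1+2 = i+3 by ring]
      exact mkAdj (S.yne (by rw [show i+3 = (i+1)+2 by ring]; exact (zmod_ne_add2 S.hn5) (i+1)))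
        (Or.inl hprod)
  have d0 := hD 0
  have d1 := hD 1
  have d2 := hD 2
  have nLL0 := noLL 0
  have nLL1 := noLL 1
  have nRR0 := noRR 0
  have nK0 := hKILL 0
  have nK1 := hKILL 1
  simp only [zero_add] at d0 nLL0 nRR0 nK0
  rw [show (1 : ZMod n) + 1 = 2 by ring] at d1
  rw [show (1 : ZMod n) + 2 = 3 by ring, show (1 : ZMod n) + 1 = 2 by ring] at nLL1 nK1
  rw [show (2 : ZMod n) + 1 = 3 by ring] at d2
  rcases d0 with hL0 | hR0
  · rcases d1 with h1 | h1
    · exact nLL0 hL0 h1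
    · exact nK0 hL0 h1
  · rcases d1 with h1 | h1
    · rcases d2 with h2 | h2
      · exact nLL1 h1 h2
      · exact nK1 h1 h2
    · exact nRR0 hR0 h1

end CycleSetup

end GirthCore

section Assemble

variable {R : Type*} [Ring R]

theorem cycleSetup_false {n : ℕ} (S : CycleSetup R n) : False := by
  haveI : NeZero n := ⟨by have := S.hn5; omega⟩
  by_cases hI : ∃ i : ZMod n, (S.y (i+1) : AddSubgroup R) * (S.y i : AddSubgroup R) = ⊥ ∧
      (S.y (i+1) : AddSubgroup R) * (S.y (i+2) : AddSubgroup R) = ⊥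
  · obtain ⟨i, a, b⟩ := hI
    exact S.caseI i a b
  by_cases hI' : ∃ i : ZMod n, (S.y i : AddSubgroup R) * (S.y (i+1) : AddSubgroup R) = ⊥ ∧
      (S.y (i+2) : AddSubgroup R) * (S.y (i+1) : AddSubgroup R) = ⊥
  · obtain ⟨i, a, b⟩ := hI'
    exact S.caseI' i a b
  push_neg at hI hI'
  have hPQ : ∀ i : ZMod n, (S.y i : AddSubgroup R) * (S.y (i+1) : AddSubgroup R) = ⊥ ∨
      (S.y (i+1) : AddSubgroup R) * (S.y i : AddSubgroup R) = ⊥ := fun i => (S.hadj i).2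
  rcases hPQ 0 with h0 | h0
  · -- all edges are directed forward
    have hall : ∀ m : ℕ, (S.y (m : ZMod n) : AddSubgroup R) *
        (S.y ((m : ZMod n)+1) : AddSubgroup R) = ⊥ := by
      intro m
      induction m with
      | zero => simpa using h0
      | succ k ih =>
        have hcast : ((k+1 : ℕ) : ZMod n) = (k : ZMod n) + 1 := by push_cast; ring
        rw [hcast]
        rcases hPQ ((k : ZMod n)+1) with h | h
        · exact h
        · exfalso
          exact hI' (k : ZMod n) ih
            (by rwa [show (k : ZMod n)+1+1 = (k : ZMod n)+2 by ring] at h)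
    have hdir : ∀ i : ZMod n, (S.y i : AddSubgroup R) * (S.y (i+1) : AddSubgroup R) = ⊥ := by
      intro i
      have h := hall i.val
      rwa [ZMod.natCast_rightInverse i] at h
    exact S.dirCase hdir
  · -- all edges are directed backward; use the reversed cycle
    have hall : ∀ m : ℕ, (S.y ((m : ZMod n)+1) : AddSubgroup R) *
        (S.y (m : ZMod n) : AddSubgroup R) = ⊥ := by
      intro m
      induction m with
      | zero => simpa using h0
      | succ k ih =>
        have hcast : ((k+1 : ℕ) : ZMod n) = (k : ZMod n) + 1 := by push_cast; ring
        rw [hcast]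
        rcases hPQ ((k : ZMod n)+1) with h | h
        · exfalso
          exact hI (k : ZMod n) ih
            (by rwa [show (k : ZMod n)+1+1 = (k : ZMod n)+2 by ring] at h)
        · exact h
    have hQdir : ∀ i : ZMod n, (S.y (i+1) : AddSubgroup R) * (S.y i : AddSubgroup R) = ⊥ := by
      intro i
      have h := hall i.val
      rwa [ZMod.natCast_rightInverse i] at h
    let T : CycleSetup R n :=
      { hn5 := S.hn5
        hT := S.hT
        hQ := S.hQ
        y := fun i => S.y (-i)
        hadj := by
          intro i
          have h := S.hadj (-(i+1))
          rw [show -(i+1)+1 = -i by ring] at h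
          exact h.symm
        hinj := fun a b h => neg_injective (S.hinj h) }
    apply T.dirCase
    intro i
    show (S.y (-i) : AddSubgroup R) * (S.y (-(i+1)) : AddSubgroup R) = ⊥
    have h := hQdir (-i-1)
    rw [show -i-1+1 = -i by ring] at h
    rw [show -(i+1) = -i-1 by ring]
    exact h

theorem girth_part (hcyc : ¬ (apogGraph R).IsAcyclic) : (apogGraph R).girth ≤ 4 := by
  by_contra h4
  push_neg at h4
  obtain ⟨a, w, hw, hlen⟩ := (SimpleGraph.exists_girth_eq_length (G := apogGraph R)).mpr hcyc
  have hn5 : 5 ≤ w.length := by omega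
  haveI : NeZero w.length := ⟨by omega⟩
  haveI : Fact (1 < w.length) := ⟨by omega⟩
  have hT : ∀ x y z : {A : AddSubgroup R // APOGVertex R A},
      (apogGraph R).Adj x y → (apogGraph R).Adj y z → (apogGraph R).Adj z x → False := by
    intro x y z h1 h2 h3
    have := girth_le_three h1 h2 h3
    omega
  have hQ : ∀ x y z t : {A : AddSubgroup R // APOGVertex R A},
      (apogGraph R).Adj x y → (apogGraph R).Adj y z → (apogGraph R).Adj z t →
      (apogGraph R).Adj t x → x ≠ z → y ≠ t → False := by
    intro x y z t h1 h2 h3 h4' hxz hyt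
    have := girth_le_four h1 h2 h3 h4' hxz hyt
    omega
  have hadj : ∀ i : ZMod w.length,
      (apogGraph R).Adj (w.getVert i.val) (w.getVert (i+1).val) := by
    intro i
    have hv : i.val < w.length := ZMod.val_lt i
    by_cases hlast : i.val + 1 = w.length
    · have h1 : (i+1).val = 0 := by
        rw [ZMod.val_add, ZMod.val_one, hlast, Nat.mod_self]
      have h2 := w.adj_getVert_succ hv
      rw [hlast, SimpleGraph.Walk.getVert_length] at h2
      rw [h1, SimpleGraph.Walk.getVert_zero]
      exact h2
    · have hlt : i.val + 1 < w.length := by omega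
      have h1 : (i+1).val = i.val + 1 := by
        rw [ZMod.val_add, ZMod.val_one]
        exact Nat.mod_eq_of_lt hlt
      rw [h1]
      exact w.adj_getVert_succ hv
  have hinj : Function.Injective (fun i : ZMod w.length => w.getVert i.val) := by
    intro a b h
    have := cycle_getVert_injOn hw a.val b.val (ZMod.val_lt a) (ZMod.val_lt b) h
    exact ZMod.val_injective _ this
  exact (cycleSetup_false
    { hn5 := hn5, hT := hT, hQ := hQ, y := fun i => w.getVert i.val,
      hadj := hadj, hinj := hinj }).elim

end Assemble

end APOGAux

/-- `APOḠ(R)` is connected with diameter at most `3`; moreover, if it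
contains a cycle then its girth is at most `4`. -/
theorem apogGraph_connected_diam_girth (R : Type*) [Ring R] :
    (apogGraph R).Preconnected ∧
    (∀ A B : {A : AddSubgroup R // APOGVertex R A}, (apogGraph R).dist A B ≤ 3) ∧
    (¬ (apogGraph R).IsAcyclic → (apogGraph R).girth ≤ 4) := by
  refine ⟨?_, ?_, ?_⟩
  · intro u v
    obtain ⟨b, c, h1, h2, h3⟩ := APOGAux.exists_chain u v
    exact (APOGAux.step3_dist h1 h2 h3).1
  · intro A B
    obtain ⟨b, c, h1, h2, h3⟩ := APOGAux.exists_chain A B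
    exact (APOGAux.step3_dist h1 h2 h3).2
  · exact APOGAux.girth_part
end

section
/- Let R be a nonzero commutative ring with identity and let n ≥ 2. Then the girth of APOḠ(M_n(R)) equals 3; i.e., APOḠ(M_n(R)) contains a triangle and a triangle is a shortest cycle. -/
open scoped Pointwise

open Matrix

section Aux

variable {R : Type*} [CommRing R] {n : ℕ}

abbrev MM (R : Type*) [CommRing R] (n : ℕ) := Matrix (Fin n) (Fin n) R

/-- Matrices supported in row `i`. -/
def rowGrp (i : Fin n) : AddSubgroup (MM R n) where
  carrier := {A | ∀ p q, p ≠ i → A p q = 0}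
  zero_mem' := by intro p q _; rfl
  add_mem' := by intro A B hA hB p q h; simp [Matrix.add_apply, hA p q h, hB p q h]
  neg_mem' := by intro A hA p q h; simp [Matrix.neg_apply, hA p q h]

/-- Matrices supported in column `j`. -/
def colGrp (j : Fin n) : AddSubgroup (MM R n) where
  carrier := {A | ∀ p q, q ≠ j → A p q = 0}
  zero_mem' := by intro p q _; rfl
  add_mem' := by intro A B hA hB p q h; simp [Matrix.add_apply, hA p q h, hB p q h]
  neg_mem' := by intro A hA p q h; simp [Matrix.neg_apply, hA p q h]

/-- Matrices supported at entry `(i, j)`. -/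
def entryGrp (i j : Fin n) : AddSubgroup (MM R n) where
  carrier := {A | ∀ p q, ¬(p = i ∧ q = j) → A p q = 0}
  zero_mem' := by intro p q _; rfl
  add_mem' := by intro A B hA hB p q h; simp [Matrix.add_apply, hA p q h, hB p q h]
  neg_mem' := by intro A hA p q h; simp [Matrix.neg_apply, hA p q h]

lemma rowGrp_isRight (i : Fin n) : IsRightIdeal (MM R n) (rowGrp i) := by
  intro B A hA p q hp
  simp only [Matrix.mul_apply]
  exact Finset.sum_eq_zero fun k _ => by rw [hA p k hp, zero_mul]

lemma colGrp_isLeft (j : Fin n) : IsLeftIdeal (MM R n) (colGrp j) := by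
  intro B A hA p q hq
  simp only [Matrix.mul_apply]
  exact Finset.sum_eq_zero fun k _ => by rw [hA k q hq, mul_zero]

lemma rowGrp_mul_colGrp (i j : Fin n) :
    rowGrp (R := R) i * colGrp j = entryGrp i j := by
  apply le_antisymm
  · intro x hx
    have hx' : x ∈ (rowGrp (R := R) i).toAddSubmonoid * (colGrp j).toAddSubmonoid := hx
    refine AddSubmonoid.mul_induction_on hx' ?_ ?_
    · intro a ha b hb p q hpq
      simp only [Matrix.mul_apply]
      refine Finset.sum_eq_zero fun k _ => ?_
      by_cases hp : p = i
      · have hq : q ≠ j := fun h => hpq ⟨hp, h⟩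
        rw [hb k q hq, mul_zero]
      · rw [ha p k hp, zero_mul]
    · intro a b ha hb p q hpq
      simp [Matrix.add_apply, ha p q hpq, hb p q hpq]
  · intro A hA
    have key : (Matrix.single i i (1 : R)) * A = A := by
      ext p q
      by_cases hp : p = i
      · subst hp; simp
      · rw [Matrix.single_mul_apply_of_ne (c := (1:R)) i i p q hp A,
          hA p q (fun h => hp h.1)]
    have h1 : (Matrix.single i i (1 : R)) ∈ rowGrp (R := R) i := by
      intro p q hp
      exact Matrix.single_apply_of_ne i i (1:R) p q (fun h => hp h.1.symm)
    have h2 : A ∈ colGrp (R := R) j := fun p q hq => hA p q (fun h => hq h.2)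
    have : (Matrix.single i i (1 : R)) * A ∈
        (rowGrp (R := R) i).toAddSubmonoid * (colGrp j).toAddSubmonoid :=
      AddSubmonoid.mul_mem_mul h1 h2
    rw [key] at this
    exact this

lemma entryGrp_mem_IPO (i j : Fin n) : entryGrp (R := R) i j ∈ IPO (MM R n) :=
  ⟨rowGrp i, colGrp j, Or.inr (rowGrp_isRight i), Or.inl (colGrp_isLeft j),
    (rowGrp_mul_colGrp i j).symm⟩

lemma entryGrp_ne_bot [Nontrivial R] (i j : Fin n) : entryGrp (R := R) i j ≠ ⊥ := by
  intro h
  have hm : Matrix.single i j (1 : R) ∈ entryGrp (R := R) i j := by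
    intro p q hpq
    exact Matrix.single_apply_of_ne i j (1:R) p q (fun h' => hpq ⟨h'.1.symm, h'.2.symm⟩)
  rw [h, AddSubgroup.mem_bot] at hm
  have := congrFun (congrFun hm i) j
  simp at this

lemma entryGrp_mul_eq_bot (i j k l : Fin n) (h : j ≠ k) :
    entryGrp (R := R) i j * entryGrp k l = ⊥ := by
  rw [eq_bot_iff]
  intro x hx
  have hx' : x ∈ (entryGrp (R := R) i j).toAddSubmonoid * (entryGrp k l).toAddSubmonoid := hx
  rw [AddSubgroup.mem_bot]
  refine AddSubmonoid.mul_induction_on hx' ?_ ?_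
  · intro a ha b hb
    ext p q
    simp only [Matrix.mul_apply, Matrix.zero_apply]
    refine Finset.sum_eq_zero fun m _ => ?_
    by_cases hm : m = j
    · have : ¬(m = k ∧ q = l) := fun hh => h (hm ▸ hh.1)
      rw [hb m q this, mul_zero]
    · rw [ha p m (fun hh => hm hh.2), zero_mul]
  · intro a b ha hb; rw [ha, hb, add_zero]

lemma entryGrp_ne [Nontrivial R] {i j k l : Fin n} (h : ¬(i = k ∧ j = l)) :
    entryGrp (R := R) i j ≠ entryGrp k l := by
  intro he
  have hm : Matrix.single i j (1 : R) ∈ entryGrp (R := R) i j := by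
    intro p q hpq
    exact Matrix.single_apply_of_ne i j (1:R) p q (fun h' => hpq ⟨h'.1.symm, h'.2.symm⟩)
  rw [he] at hm
  have := hm i j h
  simp at this

end Aux

/-- For a nonzero commutative ring `R` and `n ≥ 2`, the girth of
`APOḠ(Mₙ(R))` equals `3`. -/
theorem matrix_apog_girth_eq_three (R : Type*) [CommRing R] [Nontrivial R]
    (n : ℕ) (hn : 2 ≤ n) :
    (apogGraph (Matrix (Fin n) (Fin n) R)).girth = 3 := by
  set G := apogGraph (Matrix (Fin n) (Fin n) R) with hG
  let i0 : Fin n := ⟨0, by omega⟩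
  let i1 : Fin n := ⟨1, by omega⟩
  have h01 : i0 ≠ i1 := by simp [i0, i1, Fin.ext_iff]
  have hIPO : ∀ i j : Fin n, entryGrp (R := R) i j ∈ IPO (Matrix (Fin n) (Fin n) R) :=
    fun i j => entryGrp_mem_IPO i j
  have hva : APOGVertex (Matrix (Fin n) (Fin n) R) (entryGrp i0 i0) :=
    ⟨hIPO _ _, entryGrp_ne_bot _ _,
      entryGrp i1 i1, hIPO _ _, entryGrp_ne_bot _ _,
      Or.inl (entryGrp_mul_eq_bot i0 i0 i1 i1 h01)⟩
  have hvb : APOGVertex (Matrix (Fin n) (Fin n) R) (entryGrp i0 i1) :=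
    ⟨hIPO _ _, entryGrp_ne_bot _ _,
      entryGrp i0 i0, hIPO _ _, entryGrp_ne_bot _ _,
      Or.inl (entryGrp_mul_eq_bot i0 i1 i0 i0 h01.symm)⟩
  have hvc : APOGVertex (Matrix (Fin n) (Fin n) R) (entryGrp i1 i1) :=
    ⟨hIPO _ _, entryGrp_ne_bot _ _,
      entryGrp i0 i0, hIPO _ _, entryGrp_ne_bot _ _,
      Or.inl (entryGrp_mul_eq_bot i1 i1 i0 i0 h01.symm)⟩
  let A : {A // APOGVertex (Matrix (Fin n) (Fin n) R) A} := ⟨entryGrp i0 i0, hva⟩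
  let B : {A // APOGVertex (Matrix (Fin n) (Fin n) R) A} := ⟨entryGrp i0 i1, hvb⟩
  let C : {A // APOGVertex (Matrix (Fin n) (Fin n) R) A} := ⟨entryGrp i1 i1, hvc⟩
  have hABne : A ≠ B := fun h =>
    entryGrp_ne (R := R) (i := i0) (j := i0) (k := i0) (l := i1)
      (fun hh => h01 hh.2) (congrArg Subtype.val h)
  have hBCne : B ≠ C := fun h =>
    entryGrp_ne (R := R) (i := i0) (j := i1) (k := i1) (l := i1)
      (fun hh => h01 hh.1) (congrArg Subtype.val h)
  have hACne : A ≠ C := fun h =>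
    entryGrp_ne (R := R) (i := i0) (j := i0) (k := i1) (l := i1)
      (fun hh => h01 hh.1) (congrArg Subtype.val h)
  have hAB : G.Adj A B := ⟨hABne, Or.inr (entryGrp_mul_eq_bot i0 i1 i0 i0 h01.symm)⟩
  have hBC : G.Adj B C := ⟨hBCne, Or.inr (entryGrp_mul_eq_bot i1 i1 i0 i1 h01.symm)⟩
  have hCA : G.Adj C A := ⟨hACne.symm, Or.inl (entryGrp_mul_eq_bot i1 i1 i0 i0 h01.symm)⟩
  let w : G.Walk A A := .cons hAB (.cons hBC (.cons hCA .nil))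
  have hcyc : w.IsCycle := by
    rw [SimpleGraph.Walk.cons_isCycle_iff]
    constructor
    · rw [SimpleGraph.Walk.cons_isPath_iff]
      refine ⟨?_, ?_⟩
      · rw [SimpleGraph.Walk.cons_isPath_iff]
        exact ⟨SimpleGraph.Walk.IsPath.nil, by simp [hACne.symm]⟩
      · simp [hABne.symm, hBCne]
    · simp only [SimpleGraph.Walk.edges_cons, SimpleGraph.Walk.edges_nil,
        List.mem_cons, List.not_mem_nil, or_false]
      push_neg
      constructor
      · intro h
        rcases Sym2.eq_iff.mp h with ⟨h1, _⟩ | ⟨h1, _⟩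
        · exact hABne h1
        · exact hACne h1
      · intro h
        rcases Sym2.eq_iff.mp h with ⟨h1, _⟩ | ⟨_, h2⟩
        · exact hACne h1
        · exact hBCne h2
  have hle : G.egirth ≤ 3 := by
    rw [SimpleGraph.egirth]
    refine iInf_le_of_le A (iInf_le_of_le w (iInf_le_of_le hcyc ?_))
    simp [w]
  have heg : G.egirth = 3 := le_antisymm hle SimpleGraph.three_le_egirth
  simp [SimpleGraph.girth, heg]
end

section
/- Let K be a field, let V = ⊕_{i=1}^∞ K be the K-vector space of finitely supported sequences, and let R = End_K(V) be its ring of K-linear endomorphisms. Let f ∈ R be the right-shift map (a₁, a₂, …) ↦ (0, a₁, a₂, …) and let π₁ ∈ R be the projection (a₁, a₂, …) ↦ (a₁, 0, 0, …). Then (Rπ₁)(fR) = 0, so both Rπ₁ and fR are vertices of the directed graph Γ(IPO(R)); however, (fR)·A ≠ 0 for every nonzero A ∈ IPO(R) (because f has a left inverse in R), so the vertex fR has no outgoing edge and hence Γ(IPO(R)) is not connected. -/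
open scoped Pointwise

/-- The principal left ideal `Rx`. -/
def leftPrincipal {R : Type*} [Ring R] (x : R) : AddSubgroup R where
  carrier := Set.range fun r => r * x
  zero_mem' := ⟨0, zero_mul x⟩
  add_mem' := by rintro a b ⟨r, rfl⟩ ⟨s, rfl⟩; exact ⟨r + s, by simp [add_mul]⟩
  neg_mem' := by rintro a ⟨r, rfl⟩; exact ⟨-r, by simp⟩

/-- The principal right ideal `xR`. -/
def rightPrincipal {R : Type*} [Ring R] (x : R) : AddSubgroup R where
  carrier := Set.range fun r => x * r
  zero_mem' := ⟨0, mul_zero x⟩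
  add_mem' := by rintro a b ⟨r, rfl⟩ ⟨s, rfl⟩; exact ⟨r + s, by simp [mul_add]⟩
  neg_mem' := by rintro a ⟨r, rfl⟩; exact ⟨-r, by simp⟩

/-- The right shift `(a₁, a₂, …) ↦ (0, a₁, a₂, …)` on `V = ⊕ℕ K`, as a `K`-linear
endomorphism. -/
noncomputable def rightShift (K : Type*) [Field K] : Module.End K (ℕ →₀ K) :=
  Finsupp.lmapDomain K K Nat.succ

/-- The projection `(a₁, a₂, …) ↦ (a₁, 0, 0, …)` on `V = ⊕ℕ K`, as a `K`-linear
endomorphism. -/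
noncomputable def projFirst (K : Type*) [Field K] : Module.End K (ℕ →₀ K) :=
  (Finsupp.lsingle 0).comp (Finsupp.lapply 0)

noncomputable instance instMulAddSubgroupEnd (K : Type*) [Field K] :
    Mul (AddSubgroup (Module.End K (ℕ →₀ K))) :=
  AddSubgroup.mul (R := Module.End K (ℕ →₀ K))

section Aux

open scoped Pointwise

variable {R : Type*} [Ring R]

lemma AG.mul_mem_mul {M N : AddSubgroup R} {m n : R} (hm : m ∈ M) (hn : n ∈ N) :
    m * n ∈ M * N :=
  AddSubmonoid.mul_mem_mul hm hn

lemma AG.mul_le {M N P : AddSubgroup R} : M * N ≤ P ↔ ∀ m ∈ M, ∀ n ∈ N, m * n ∈ P := by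
  constructor
  · intro h m hm n hn; exact h (AG.mul_mem_mul hm hn)
  · intro h x hx
    exact AddSubmonoid.mul_induction_on hx h (fun _ _ h1 h2 => P.add_mem h1 h2)

lemma AG.top_oneSided : IsOneSidedIdeal R (⊤ : AddSubgroup R) :=
  Or.inl (fun _ _ _ => trivial)

lemma AG.leftPrincipal_isLeft (x : R) : IsLeftIdeal R (leftPrincipal x) := by
  rintro r y ⟨s, rfl⟩; exact ⟨r * s, by simp [mul_assoc]⟩

lemma AG.rightPrincipal_isRight (x : R) : IsRightIdeal R (rightPrincipal x) := by
  rintro r y ⟨s, rfl⟩; exact ⟨s * r, by simp [mul_assoc]⟩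

lemma AG.top_mul_left {I : AddSubgroup R} (hI : IsLeftIdeal R I) :
    (⊤ : AddSubgroup R) * I = I := by
  refine le_antisymm (AG.mul_le.2 fun m _ n hn => hI m n hn) (fun x hx => ?_)
  simpa using AG.mul_mem_mul (M := ⊤) (AddSubgroup.mem_top 1) hx

lemma AG.right_mul_top {I : AddSubgroup R} (hI : IsRightIdeal R I) :
    I * (⊤ : AddSubgroup R) = I := by
  refine le_antisymm (AG.mul_le.2 fun m hm n _ => hI n m hm) (fun x hx => ?_)
  simpa using AG.mul_mem_mul hx (AddSubgroup.mem_top 1)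

lemma AG.leftPrincipal_mem_IPO (x : R) : leftPrincipal x ∈ IPO R :=
  ⟨⊤, leftPrincipal x, AG.top_oneSided, Or.inl (AG.leftPrincipal_isLeft x),
    (AG.top_mul_left (AG.leftPrincipal_isLeft x)).symm⟩

lemma AG.rightPrincipal_mem_IPO (x : R) : rightPrincipal x ∈ IPO R :=
  ⟨rightPrincipal x, ⊤, Or.inr (AG.rightPrincipal_isRight x), AG.top_oneSided,
    (AG.right_mul_top (AG.rightPrincipal_isRight x)).symm⟩

lemma AG.self_mem_left (x : R) : x ∈ leftPrincipal x := ⟨1, one_mul x⟩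
lemma AG.self_mem_right (x : R) : x ∈ rightPrincipal x := ⟨1, mul_one x⟩

lemma AG.leftPrincipal_ne_bot {x : R} (hx : x ≠ 0) : leftPrincipal x ≠ ⊥ := by
  intro h
  exact hx (by simpa [h, AddSubgroup.mem_bot] using AG.self_mem_left x)

lemma AG.rightPrincipal_ne_bot {x : R} (hx : x ≠ 0) : rightPrincipal x ≠ ⊥ := by
  intro h
  exact hx (by simpa [h, AddSubgroup.mem_bot] using AG.self_mem_right x)

end Aux

section Shift

variable (K : Type*) [Field K]

lemma proj_mul_shift : projFirst K * rightShift K = 0 := by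
  refine LinearMap.ext fun v => ?_
  simp only [Module.End.mul_apply, projFirst, rightShift, LinearMap.comp_apply,
    Finsupp.lsingle_apply, Finsupp.lapply_apply, Finsupp.lmapDomain_apply,
    LinearMap.zero_apply]
  rw [Finsupp.mapDomain_notin_range]
  · simp
  · rintro ⟨n, hn⟩; exact Nat.succ_ne_zero n hn

lemma pred_mul_shift : (Finsupp.lmapDomain K K Nat.pred) * rightShift K = 1 := by
  refine LinearMap.ext fun v => ?_
  simp only [Module.End.mul_apply, rightShift, Finsupp.lmapDomain_apply,
    Module.End.one_apply]
  rw [← Finsupp.mapDomain_comp]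
  have : Nat.pred ∘ Nat.succ = id := funext fun n => rfl
  rw [this, Finsupp.mapDomain_id]

lemma shift_ne_zero : rightShift K ≠ 0 := by
  intro h
  have := congrArg (fun g => (g (Finsupp.single 0 (1:K))) 1) h
  simp [rightShift, Finsupp.mapDomain_single] at this

lemma proj_ne_zero : projFirst K ≠ 0 := by
  intro h
  have := congrArg (fun g => (g (Finsupp.single 0 (1:K))) 0) h
  simp [projFirst] at this

lemma transGen_exists_head {α : Type*} {r : α → α → Prop} {a b : α}
    (h : Relation.TransGen r a b) : ∃ c, r a c := by
  induction h with
  | single h => exact ⟨_, h⟩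
  | tail _ _ ih => exact ih

end Shift

/-- Let `K` be a field, `V = ⊕ℕ K` (finitely supported sequences) and
`R = End_K(V)`.  With `f` the right shift and `π₁` the projection onto the first
coordinate, `(Rπ₁)(fR) = 0`, both `Rπ₁` and `fR` are vertices of `Γ(IPO(R))`, yet
`(fR)·A ≠ 0` for every nonzero `A ∈ IPO(R)` (because `f` has a left inverse in `R`), so
the vertex `fR` has no outgoing edge and `Γ(IPO(R))` is not connected. -/
theorem shift_example_not_connected (K : Type*) [Field K] :
    leftPrincipal (projFirst K) * rightPrincipal (rightShift K) = ⊥ ∧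
    APOGVertex (Module.End K (ℕ →₀ K)) (leftPrincipal (projFirst K)) ∧
    APOGVertex (Module.End K (ℕ →₀ K)) (rightPrincipal (rightShift K)) ∧
    (∃ g : Module.End K (ℕ →₀ K), g * rightShift K = 1) ∧
    (∀ A ∈ IPO (Module.End K (ℕ →₀ K)), A ≠ ⊥ →
      rightPrincipal (rightShift K) * A ≠ ⊥) ∧
    (∀ B : AddSubgroup (Module.End K (ℕ →₀ K)),
      ¬ APOGEdge (Module.End K (ℕ →₀ K)) (rightPrincipal (rightShift K)) B) ∧
    ¬ (∀ A B : AddSubgroup (Module.End K (ℕ →₀ K)),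
        APOGVertex (Module.End K (ℕ →₀ K)) A → APOGVertex (Module.End K (ℕ →₀ K)) B →
        A ≠ B → Relation.TransGen (APOGEdge (Module.End K (ℕ →₀ K))) A B) := by
  set R := Module.End K (ℕ →₀ K)
  have hPF : leftPrincipal (projFirst K) * rightPrincipal (rightShift K) = ⊥ := by
    refine (eq_bot_iff).2 (AG.mul_le.2 ?_)
    rintro m ⟨r, rfl⟩ n ⟨s, rfl⟩
    have : r * projFirst K * (rightShift K * s) = r * (projFirst K * rightShift K) * s := by
      simp only [mul_assoc]
    rw [AddSubgroup.mem_bot, this, proj_mul_shift]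
    simp
  have hPne : leftPrincipal (projFirst K) ≠ (⊥ : AddSubgroup R) :=
    AG.leftPrincipal_ne_bot (proj_ne_zero K)
  have hFne : rightPrincipal (rightShift K) ≠ (⊥ : AddSubgroup R) :=
    AG.rightPrincipal_ne_bot (shift_ne_zero K)
  have hPipo := AG.leftPrincipal_mem_IPO (projFirst K)
  have hFipo := AG.rightPrincipal_mem_IPO (rightShift K)
  have hPV : APOGVertex R (leftPrincipal (projFirst K)) :=
    ⟨hPipo, hPne, rightPrincipal (rightShift K), hFipo, hFne, Or.inl hPF⟩
  have hFV : APOGVertex R (rightPrincipal (rightShift K)) :=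
    ⟨hFipo, hFne, leftPrincipal (projFirst K), hPipo, hPne, Or.inr hPF⟩
  have hNoKill : ∀ A ∈ IPO R, A ≠ ⊥ → rightPrincipal (rightShift K) * A ≠ ⊥ := by
    intro A _ hA h
    apply hA
    refine (AddSubgroup.eq_bot_iff_forall A).2 fun a ha => ?_
    have hfa : rightShift K * a ∈ rightPrincipal (rightShift K) * A :=
      AG.mul_mem_mul (AG.self_mem_right _) ha
    rw [h, AddSubgroup.mem_bot] at hfa
    have := congrArg (fun x => Finsupp.lmapDomain K K Nat.pred * x) hfa
    simpa [← mul_assoc, pred_mul_shift] using this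
  have hNoEdge : ∀ B : AddSubgroup R, ¬ APOGEdge R (rightPrincipal (rightShift K)) B := by
    rintro B ⟨_, ⟨hBipo, hBne, _⟩, _, hmul⟩
    exact hNoKill B hBipo hBne hmul
  refine ⟨hPF, hPV, hFV, ⟨Finsupp.lmapDomain K K Nat.pred, pred_mul_shift K⟩,
    hNoKill, hNoEdge, ?_⟩
  intro h
  have hne : rightPrincipal (rightShift K) ≠ leftPrincipal (projFirst K) := by
    intro he
    have h2 : rightPrincipal (rightShift K) * rightPrincipal (rightShift K) =
        leftPrincipal (projFirst K) * rightPrincipal (rightShift K) := by rw [he]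
    exact hNoKill _ hFipo hFne (h2.trans hPF)
  have := h _ _ hFV hPV hne
  obtain ⟨c, hc⟩ := transGen_exists_head this
  exact hNoEdge _ hc
end
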